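/- arXiv:1409.0597 — 7 statements merged into one kernel-verified Lean document; each statement's English description precedes it below -/
import Mathlib

section
/- Let G be a finite simple graph in which every vertex is incident to at least one edge, and let w be an injective real-valued weight function on the edges of G. For each vertex v, let sel(v) denote the edge incident to v of minimum weight. Then the spanning subgraph of G whose edge set is { sel(v) : v a vertex of G } is acyclic, i.e., it contains no cycle. -/
lemma head_ne_getLast' {α : Type*} {l : List α} (hne : l ≠ []) (hnd : l.Nodup)
    (h2 : 2 ≤ l.length) : l.head hne ≠ l.getLast hne := by
  obtain ⟨x, xs, rfl⟩ := List.exists_cons_of_ne_nil hne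
  have hxs : xs ≠ [] := by intro h; subst h; simp at h2
  rw [List.head_cons, List.getLast_cons hxs]
  intro habs
  have : x ∈ xs := habs ▸ List.getLast_mem hxs
  simp [List.nodup_cons] at hnd
  exact hnd.1 this

lemma head_edge_mem' {V : Type*} {G : SimpleGraph V} {u : V} (c : G.Walk u u)
    (hne : c.edges ≠ []) : u ∈ c.edges.head hne := by
  cases c with
  | nil => simp at hne
  | cons h p =>
    simp only [SimpleGraph.Walk.edges_cons, List.head_cons]
    exact Sym2.mem_mk_left _ _

/-- In a cycle starting at `u`, there are two distinct edges containing `u`. -/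
lemma two_incident_edges' {V : Type*} {G : SimpleGraph V} {u : V} {c : G.Walk u u}
    (hc : c.IsCycle) :
    ∃ e₁ e₂, e₁ ∈ c.edges ∧ e₂ ∈ c.edges ∧ u ∈ e₁ ∧ u ∈ e₂ ∧ e₁ ≠ e₂ := by
  have h3 : 3 ≤ c.length := hc.three_le_length
  have hlen : c.edges.length = c.length := c.length_edges
  have hne : c.edges ≠ [] := by
    intro h; rw [h] at hlen; simp at hlen; omega
  refine ⟨c.edges.head hne, c.edges.getLast hne, List.head_mem hne, List.getLast_mem hne,
    head_edge_mem' c hne, ?_, head_ne_getLast' hne hc.edges_nodup (by omega)⟩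
  have hne' : c.reverse.edges ≠ [] := by
    rw [c.edges_reverse]; simpa using hne
  have hmem := head_edge_mem' c.reverse hne'
  have heq : c.reverse.edges.head hne' = c.edges.getLast hne := by
    simp only [c.edges_reverse] at hne' hmem ⊢
    rw [List.head_reverse]
  rwa [heq] at hmem

/-- If every vertex of a finite simple graph `G` is incident to at least one edge,
edge weights `w` are injective on the edges of `G`, and `sel v` is the minimum-weight
edge incident to `v`, then the spanning subgraph with edge set `{sel v : v ∈ V}`
is acyclic. -/
theorem stmt_0 {V : Type*} [Fintype V] [DecidableEq V] (G : SimpleGraph V)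
    (hinc : ∀ v : V, ∃ e ∈ G.edgeSet, v ∈ e)
    (w : Sym2 V → ℝ) (hw : Set.InjOn w G.edgeSet)
    (sel : V → Sym2 V)
    (hsel : ∀ v : V, sel v ∈ G.edgeSet ∧ v ∈ sel v ∧
      ∀ e ∈ G.edgeSet, v ∈ e → w (sel v) ≤ w e) :
    (SimpleGraph.fromEdgeSet (Set.range sel)).IsAcyclic := by
  intro a c hc
  -- every edge of the walk is some `sel x`, hence in `G.edgeSet`
  have hsub : ∀ f ∈ c.edges, ∃ x, f = sel x := by
    intro f hf
    have := c.edges_subset_edgeSet hf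
    rw [SimpleGraph.edgeSet_fromEdgeSet] at this
    obtain ⟨⟨x, rfl⟩, -⟩ := this
    exact ⟨x, rfl⟩
  have hsubG : ∀ f ∈ c.edges, f ∈ G.edgeSet := by
    intro f hf
    obtain ⟨x, rfl⟩ := hsub f hf
    exact (hsel x).1
  -- pick the maximum-weight edge of the cycle
  have hlen : c.edges.length = c.length := c.length_edges
  have h3 : 3 ≤ c.length := hc.three_le_length
  have hne : c.edges ≠ [] := by intro h; rw [h] at hlen; simp at hlen; omega
  have hfin : c.edges.toFinset.Nonempty := by
    simpa [List.toFinset_nonempty_iff] using hne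
  obtain ⟨e, heF, hmax⟩ := Finset.exists_max_image c.edges.toFinset w hfin
  rw [List.mem_toFinset] at heF
  have hmax' : ∀ f ∈ c.edges, w f ≤ w e := fun f hf => hmax f (List.mem_toFinset.mpr hf)
  obtain ⟨u, rfl⟩ := hsub e heF
  obtain ⟨hGe, hue, hmin⟩ := hsel u
  -- u is on the cycle
  obtain ⟨b, hb⟩ := Sym2.mem_iff_exists.mp hue
  have husup : u ∈ c.support := by
    rw [hb] at heF
    exact c.fst_mem_support_of_mem_edges heF
  -- rotate the cycle to start at u
  have hc' := hc.rotate husup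
  have hperm := (c.rotate_edges u husup).perm
  obtain ⟨e₁, e₂, he₁, he₂, hu₁, hu₂, h12⟩ := two_incident_edges' hc'
  rw [hperm.mem_iff] at he₁ he₂
  -- one of e₁, e₂ is not sel u; any such edge contradicts minimality of sel u at u
  have key : ∀ f ∈ c.edges, u ∈ f → f ≠ sel u → False := by
    intro f hf huf hfne
    have hfG : f ∈ G.edgeSet := hsubG f hf
    have h1 : w (sel u) ≤ w f := hmin f hfG huf
    have h2 : w f ≤ w (sel u) := hmax' f hf
    exact hfne (hw hfG hGe (le_antisymm h2 h1))
  by_cases h1 : e₁ = sel u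
  · exact key e₂ he₂ hu₂ (fun h => h12 (h1.trans h.symm))
  · exact key e₁ he₁ hu₁ h1
end

section
/- Let G be a finite simple graph in which every vertex is incident to at least one edge, let w be an injective real-valued weight function on the edges of G, and for each vertex v let sel(v) denote the edge incident to v of minimum weight. Then every connected component C of the spanning subgraph of G with edge set { sel(v) : v a vertex of G } contains exactly one edge e = {u, v} that is selected by both of its endpoints, i.e., with sel(u) = e and sel(v) = e. -/
open SimpleGraph

private lemma aux_L {V : Type*} [DecidableEq V] {H : SimpleGraph V} {sel : V → Sym2 V}
    (hK : ∀ a b : V, H.Adj a b → sel a = s(a, b) ∨ sel b = s(a, b))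
    {b : V} (hb : ∀ x ∈ sel b, sel x = sel b) :
    ∀ {c : V} (q : H.Walk c b) {a : V} (h : H.Adj a c),
      (q.cons h).IsPath → s(a, c) ≠ sel a → False := by
  intro c q
  induction q with
  | nil =>
    rename_i b'
    intro a h hp hne
    rcases hK a b' h with h1 | h2
    · exact hne h1.symm
    · have ha : a ∈ sel b' := by rw [h2]; simp
      exact hne ((hb a ha).trans h2).symm
  | @cons c d b h' q' ih =>
    intro a h hp hne
    have hc : sel c = s(a, c) := by
      rcases hK a c h with h1 | h2
      · exact absurd h1.symm hne
      · exact h2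
    have had : a ≠ d := by
      have h1 := (SimpleGraph.Walk.cons_isPath_iff _ _).mp hp
      intro hcontra
      refine h1.2 ?_
      rw [hcontra, SimpleGraph.Walk.support_cons]
      exact List.mem_cons_of_mem _ q'.start_mem_support
    have hne' : s(c, d) ≠ sel c := by
      rw [hc]
      intro heq
      rw [Sym2.eq_iff] at heq
      rcases heq with ⟨h1, -⟩ | ⟨-, h2⟩
      · exact h.ne' h1
      · exact had h2.symm
    exact ih hb h' hp.of_cons hne'

private lemma aux_M {V : Type*} [DecidableEq V] {H : SimpleGraph V} {sel : V → Sym2 V}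
    (hK : ∀ a b : V, H.Adj a b → sel a = s(a, b) ∨ sel b = s(a, b))
    {a b : V} (p : H.Walk a b) (hp : p.IsPath)
    (ha : ∀ x ∈ sel a, sel x = sel a) (hb : ∀ x ∈ sel b, sel x = sel b) :
    sel a = sel b := by
  cases p with
  | nil => rfl
  | @cons a c b h q =>
    by_cases hfa : s(a, c) = sel a
    · have hcmem : c ∈ sel a := by rw [← hfa]; simp
      have hc : sel c = sel a := ha c hcmem
      cases q with
      | nil => exact hc.symm
      | @cons c d b h2 q2 =>
        exfalso
        have had : a ≠ d := by
          have h1 := (SimpleGraph.Walk.cons_isPath_iff _ _).mp hp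
          intro hcontra
          refine h1.2 ?_
          rw [hcontra, SimpleGraph.Walk.support_cons]
          exact List.mem_cons_of_mem _ q2.start_mem_support
        have hne' : s(c, d) ≠ sel c := by
          rw [hc, ← hfa]
          intro heq
          rw [Sym2.eq_iff] at heq
          rcases heq with ⟨h1, -⟩ | ⟨-, h2⟩
          · exact h.ne' h1
          · exact had h2.symm
        exact aux_L hK hb q2 h2 hp.of_cons hne'
    · exact (aux_L hK hb q h hp hfa).elim

/-- With injective edge weights and `sel v` the minimum-weight edge incident to `v`,
every connected component of the spanning subgraph with edge set `{sel v : v ∈ V}`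
contains exactly one edge `e = {u, v}` that is selected by both of its endpoints. -/
theorem stmt_2 {V : Type*} [Fintype V] [DecidableEq V] (G : SimpleGraph V)
    (hinc : ∀ v : V, ∃ e ∈ G.edgeSet, v ∈ e)
    (w : Sym2 V → ℝ) (hw : Set.InjOn w G.edgeSet)
    (sel : V → Sym2 V)
    (hsel : ∀ v : V, sel v ∈ G.edgeSet ∧ v ∈ sel v ∧
      ∀ e ∈ G.edgeSet, v ∈ e → w (sel v) ≤ w e) :
    ∀ c : (SimpleGraph.fromEdgeSet (Set.range sel)).ConnectedComponent,
      ∃! e : Sym2 V,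
        e ∈ (SimpleGraph.fromEdgeSet (Set.range sel)).edgeSet ∧
        (∀ x ∈ e, (SimpleGraph.fromEdgeSet (Set.range sel)).connectedComponentMk x = c) ∧
        ∃ u v : V, e = s(u, v) ∧ sel u = e ∧ sel v = e := by
  classical
  set H := SimpleGraph.fromEdgeSet (Set.range sel) with hH
  have hK : ∀ a b : V, H.Adj a b → sel a = s(a, b) ∨ sel b = s(a, b) := by
    intro a b hadj
    rw [hH, SimpleGraph.fromEdgeSet_adj] at hadj
    obtain ⟨⟨y, hy⟩, hne⟩ := hadj
    have hymem : y ∈ sel y := (hsel y).2.1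
    rw [hy] at hymem
    rcases Sym2.mem_iff.mp hymem with h | h
    · left; rw [h] at hy; exact hy
    · right; rw [h] at hy; exact hy
  intro c
  -- pick a vertex in c minimizing w (sel ·)
  obtain ⟨x, hx⟩ := c.exists_rep
  have hSne : (Finset.univ.filter (fun y => H.connectedComponentMk y = c)).Nonempty :=
    ⟨x, Finset.mem_filter.mpr ⟨Finset.mem_univ x, hx⟩⟩
  obtain ⟨v, hvS, hvmin⟩ := Finset.exists_min_image _ (fun y => w (sel y)) hSne
  have hvc : H.connectedComponentMk v = c := by simpa using hvS
  obtain ⟨u, hu⟩ := Sym2.mem_iff_exists.mp (hsel v).2.1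
  have hvu : v ≠ u := by
    intro hvu
    have := G.not_isDiag_of_mem_edgeSet (hsel v).1
    rw [hu, hvu] at this
    exact this (Sym2.mk_isDiag_iff.mpr rfl)
  have hadj : H.Adj v u := by
    rw [hH, SimpleGraph.fromEdgeSet_adj]
    exact ⟨hu ▸ Set.mem_range_self v, hvu⟩
  have huc : H.connectedComponentMk u = c := by
    rw [← hvc]
    exact (SimpleGraph.ConnectedComponent.sound hadj.reachable).symm
  have husel : sel u = sel v := by
    have h1 : w (sel u) ≤ w (sel v) := (hsel u).2.2 (sel v) (hsel v).1 (by rw [hu]; simp)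
    have h2 : w (sel v) ≤ w (sel u) := hvmin u (by simp [huc])
    exact hw (hsel u).1 (hsel v).1 (le_antisymm h1 h2)
  have hdoubly_v : ∀ x ∈ sel v, sel x = sel v := by
    intro y hy
    rw [hu] at hy
    rcases Sym2.mem_iff.mp hy with h | h
    · rw [h]
    · rw [h]; exact husel
  refine ⟨sel v, ⟨?_, ?_, v, u, hu, rfl, husel⟩, ?_⟩
  · rw [hH, SimpleGraph.edgeSet_fromEdgeSet]
    refine ⟨Set.mem_range_self v, ?_⟩
    exact G.not_isDiag_of_mem_edgeSet (hsel v).1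
  · intro y hy
    rw [hu] at hy
    rcases Sym2.mem_iff.mp hy with h | h
    · rw [h]; exact hvc
    · rw [h]; exact huc
  · rintro e₂ ⟨he₂set, he₂comp, u₂, v₂, he₂eq, hsu₂, hsv₂⟩
    have hu₂c : H.connectedComponentMk u₂ = c :=
      he₂comp u₂ (by rw [he₂eq]; simp)
    have hreach : H.Reachable v u₂ :=
      SimpleGraph.ConnectedComponent.exact (by rw [hvc, hu₂c])
    obtain ⟨p⟩ := hreach
    have hdoubly_u₂ : ∀ x ∈ sel u₂, sel x = sel u₂ := by
      intro y hy
      rw [hsu₂, he₂eq] at hy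
      rcases Sym2.mem_iff.mp hy with h | h
      · rw [h, hsu₂]
      · rw [h, hsv₂, ← hsu₂]
    have := aux_M hK p.bypass p.bypass_isPath hdoubly_v hdoubly_u₂
    exact (this.trans hsu₂).symm
end

section
/- Let α ≥ 1 be a natural number, let G be a finite connected simple graph with more than α vertices, and let H be a spanning subgraph of G such that for every vertex v, the degree of v in H is at least min(deg_G(v), α), where deg_G(v) is the degree of v in G. Then every connected component of H contains at least α + 1 vertices. -/
/-- Let `α ≥ 1`, let `G` be a finite connected simple graph with more than `α` vertices,
and let `H` be a spanning subgraph of `G` such that every vertex `v` has degree at least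
`min (deg_G v) α` in `H`.  Then every connected component of `H` contains at least
`α + 1` vertices. -/
theorem stmt_4 {V : Type*} [Fintype V] [DecidableEq V] (α : ℕ) (hα : 1 ≤ α)
    (G : SimpleGraph V) [DecidableRel G.Adj] (hG : G.Connected)
    (hcard : α < Fintype.card V)
    (H : SimpleGraph V) [DecidableRel H.Adj] (hHG : H ≤ G)
    (hdeg : ∀ v : V, min (G.degree v) α ≤ H.degree v) :
    ∀ c : H.ConnectedComponent, α + 1 ≤ Nat.card c.supp := by
  intro c
  by_contra hlt
  push_neg at hlt
  have hsupp : Nat.card c.supp ≤ α := Nat.lt_succ_iff.mp hlt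
  have hNsupp : ∀ v ∈ c.supp, Nat.card c.supp = (c.supp).ncard := fun _ _ =>
    Nat.card_coe_set_eq _
  -- every vertex of the component has all its H-neighbors in the component,
  -- and the degree bound forces all G-neighbors to be H-neighbors
  have closed : ∀ v ∈ c.supp, ∀ w, G.Adj v w → w ∈ c.supp := by
    intro v hv w hadj
    have hnb : ((insert v (H.neighborFinset v) : Finset V) : Set V) ⊆ c.supp := by
      intro x hx
      simp only [Finset.coe_insert, Set.mem_insert_iff, Finset.mem_coe,
        SimpleGraph.mem_neighborFinset] at hx
      rcases hx with rfl | hx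
      · exact hv
      · rw [SimpleGraph.ConnectedComponent.mem_supp_iff] at hv ⊢
        rw [← hv]
        exact SimpleGraph.ConnectedComponent.connectedComponentMk_eq_of_adj hx.symm
    have hcard1 : H.degree v + 1 ≤ α := by
      have h1 : (insert v (H.neighborFinset v)).card = H.degree v + 1 := by
        rw [Finset.card_insert_of_notMem (by simp)]
        rfl
      have h2 : (insert v (H.neighborFinset v)).card ≤ (c.supp).ncard := by
        rw [← Set.ncard_coe_finset]
        exact Set.ncard_le_ncard hnb (Set.toFinite _)
      rw [← Nat.card_coe_set_eq] at h2
      omega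
    have hdegv := hdeg v
    have hGH : G.degree v ≤ H.degree v := by
      rcases min_cases (G.degree v) α with ⟨heq, _⟩ | ⟨heq, hle⟩
      · rwa [heq] at hdegv
      · omega
    have hsub : H.neighborFinset v ⊆ G.neighborFinset v := by
      intro x hx
      rw [SimpleGraph.mem_neighborFinset] at hx ⊢
      exact hHG hx
    have heqset : H.neighborFinset v = G.neighborFinset v :=
      Finset.eq_of_subset_of_card_le hsub hGH
    have hHadj : H.Adj v w := by
      rw [← SimpleGraph.mem_neighborFinset, heqset, SimpleGraph.mem_neighborFinset]
      exact hadj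
    rw [SimpleGraph.ConnectedComponent.mem_supp_iff] at hv ⊢
    rw [← hv]
    exact SimpleGraph.ConnectedComponent.connectedComponentMk_eq_of_adj hHadj.symm
  -- the component is closed under G-walks
  have walkclosed : ∀ {a b : V} (_ : G.Walk a b), a ∈ c.supp → b ∈ c.supp := by
    intro a b p
    induction p with
    | nil => exact id
    | cons h p ih => intro ha; exact ih (closed _ ha _ h)
  obtain ⟨v0, hv0⟩ := c.exists_rep
  have hv0supp : v0 ∈ c.supp := by
    rw [SimpleGraph.ConnectedComponent.mem_supp_iff]; exact hv0
  have hall : ∀ u, u ∈ c.supp := by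
    intro u
    obtain ⟨p⟩ := hG.preconnected v0 u
    exact walkclosed p hv0supp
  have : c.supp = Set.univ := Set.eq_univ_of_forall hall
  rw [this, Nat.card_coe_set_eq, Set.ncard_univ, Nat.card_eq_fintype_card] at hsupp
  omega
end

section
/- Let G be a finite tree (a connected acyclic simple graph) with a distinguished root vertex r, and let W be a closed walk in G from r to r whose list of darts contains every dart of G exactly once. Let v be a vertex with v ≠ r, let p(v) be the parent of v, let a be the index in the dart list of W of the advance dart (p(v), v), and let b be the index of the retreat dart (v, p(v)). Then a < b and b − a = 2·size(v) − 1, where size(v) is the number of vertices u of G such that v lies on the unique path from r to u. -/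
open SimpleGraph

/-- Let `G` be a finite tree rooted at `r` and let `W` be a closed walk from `r` to `r`
whose list of darts contains every dart of `G` exactly once (an Euler tour).  For a
vertex `v ≠ r` with parent `p v` (the neighbor of `v` lying on every path from `v` to
`r`), if `a` is the index in `W.darts` of the advance dart `(p v, v)` and `b` is the
index of the retreat dart `(v, p v)`, then `a < b` and `b - a = 2 * size v - 1`, where
`size v` is the number of vertices `u` such that `v` lies on the unique path from `r`
to `u`. -/
theorem stmt_5 {V : Type*} [Fintype V] [DecidableEq V] (G : SimpleGraph V)
    (hG : G.IsTree) (r : V) (W : G.Walk r r)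
    (hW : W.darts.Nodup) (hW' : ∀ d : G.Dart, d ∈ W.darts)
    (p : V → V) (v : V) (hv : v ≠ r)
    (hadj : G.Adj (p v) v)
    (hp : ∀ q : G.Path v r, p v ∈ q.val.support)
    (a b : ℕ)
    (ha : a = W.darts.idxOf (⟨(p v, v), hadj⟩ : G.Dart))
    (hb : b = W.darts.idxOf (⟨(v, p v), hadj.symm⟩ : G.Dart)) :
    a < b ∧
      b - a = 2 * Nat.card {u : V | ∀ q : G.Path r u, v ∈ q.val.support} - 1 := by
  classical
  have hEU := fun u => hG.existsUnique_path r u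
  choose P hP hPU using hEU
  set S : Set V := {u : V | ∀ q : G.Path r u, v ∈ q.val.support} with hSdef
  have hSiff : ∀ u, u ∈ S ↔ v ∈ (P u).support := by
    intro u
    constructor
    · intro h; exact h ⟨P u, hP u⟩
    · intro h q; rw [hPU u q.val q.prop]; exact h
  have hvS : v ∈ S := (hSiff v).2 ((P v).end_mem_support)
  have hnilr : P r = Walk.nil := (hPU r Walk.nil Walk.IsPath.nil).symm
  have hrS : r ∉ S := by rw [hSiff, hnilr]; simp [hv]
  -- parent
  have hpar : ∀ u, u ≠ r → ∃ (w : V) (hw : G.Adj w u),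
      P u = (P w).concat hw ∧ u ∉ (P w).support := by
    intro u hu
    obtain ⟨w, hadjw, R', hR⟩ := Walk.exists_eq_cons_of_ne hu ((P u).reverse)
    have hrev : (P u).reverse.IsPath := (hP u).reverse
    rw [hR, Walk.cons_isPath_iff] at hrev
    have hPw : R'.reverse = P w := hPU w R'.reverse hrev.1.reverse
    refine ⟨w, hadjw.symm, ?_, ?_⟩
    · conv_lhs => rw [← Walk.reverse_reverse (P u)]
      rw [hR, Walk.reverse_cons, hPw, Walk.concat_eq_append]
    · rw [← hPw, Walk.support_reverse]
      simpa using hrev.2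
  choose pa paAdj paEq paMem using hpar
  have hdep : ∀ u (hu : u ≠ r), (P u).length = (P (pa u hu)).length + 1 := by
    intro u hu; rw [paEq u hu, Walk.length_concat]
  -- uniqueness of parent
  have paUniq : ∀ u (hu : u ≠ r) (x : V) (hx : G.Adj x u) (Q : G.Walk r x),
      Q.IsPath → u ∉ Q.support → x = pa u hu := by
    intro u hu x hx Q hQ hmem
    have h1 : (Q.concat hx).IsPath := by
      rw [← Walk.isPath_reverse_iff, Walk.reverse_concat]
      exact (hQ.reverse).cons (by rwa [Walk.support_reverse, List.mem_reverse])
    have h2 : Q.concat hx = (P (pa u hu)).concat (paAdj u hu) :=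
      (hPU u _ h1).trans (paEq u hu)
    have h3 := congrArg (fun W : G.Walk r u => W.reverse.support) h2
    simp only [Walk.reverse_concat, Walk.support_cons] at h3
    rw [Walk.support_eq_cons Q.reverse, Walk.support_eq_cons ((P (pa u hu)).reverse)] at h3
    exact (List.cons_eq_cons.mp ((List.cons_eq_cons.mp h3).2)).1
  -- takeUntil avoids endpoint
  have hTU : ∀ (x u : V) (hm : u ∈ (P x).support), u ≠ x →
      x ∉ ((P x).takeUntil u hm).support := by
    intro x u hm hne hxm
    have hnd := (hP x).support_nodup
    rw [← (P x).take_spec hm, Walk.support_append] at hnd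
    have hxd : x ∈ ((P x).dropUntil u hm).support.tail := by
      have h2 := Walk.end_mem_support ((P x).dropUntil u hm)
      rw [Walk.support_eq_cons] at h2
      rcases List.mem_cons.mp h2 with h2 | h2
      · exact absurd h2.symm hne
      · exact h2
    exact (List.disjoint_of_nodup_append hnd) hxm hxd
  -- classification
  have hCL : ∀ x u (hx : G.Adj x u) (hu : u ≠ r),
      x = pa u hu ∨ ∃ hxr : x ≠ r, u = pa x hxr := by
    intro x u hx hu
    by_cases hm : u ∈ (P x).support
    · right
      have hxr : x ≠ r := by
        rintro rfl
        rw [hnilr] at hm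
        simp at hm
        exact hu hm
      refine ⟨hxr, paUniq x hxr u hx.symm _ ((hP x).takeUntil hm) (hTU x u hm hx.ne')⟩
    · left; exact paUniq u hu x hx (P x) (hP x) hm
  -- p v facts
  have hpvnS : p v ∉ S := by
    have hmem : p v ∈ (P v).support := by
      have := hp ⟨(P v).reverse, (hP v).reverse⟩
      rwa [Walk.support_reverse, List.mem_reverse] at this
    rw [hSiff, ← hPU (p v) _ ((hP v).takeUntil hmem)]
    exact hTU v (p v) hmem hadj.ne
  have hpav : pa v hv = p v := by
    rcases hCL (p v) v hadj hv with h | ⟨hpr, h⟩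
    · exact h.symm
    · exfalso
      apply hpvnS
      rw [hSiff, paEq (p v) hpr, Walk.support_concat, List.mem_append]
      left; rw [← h]; exact (P v).end_mem_support
  have hpaS : ∀ u (hu : u ≠ r), u ∈ S → u ≠ v → pa u hu ∈ S := by
    intro u hu huS hune
    rw [hSiff] at huS ⊢
    rw [paEq u hu, Walk.support_concat, List.mem_append,
      List.mem_singleton] at huS
    rcases huS with h | h
    · exact h
    · exact absurd h.symm hune
  have paCongr : ∀ u u' (hu : u ≠ r) (hu' : u' ≠ r), u = u' → pa u hu = pa u' hu' := by
    rintro u u' hu hu' rfl; rfl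
  -- cut lemmas
  have hcross : ∀ d : G.Dart, d.fst ∈ S → d.snd ∉ S →
      d = (⟨(v, p v), hadj.symm⟩ : G.Dart) := by
    rintro ⟨⟨x, y⟩, hxy⟩ h1 h2
    simp only at h1 h2 ⊢
    have hxr : x ≠ r := fun h => hrS (h ▸ h1)
    rcases hCL y x hxy.symm hxr with h | ⟨hyr, h⟩
    · have hxv : x = v := by
        rw [hSiff] at h1 h2
        rw [paEq x hxr, Walk.support_concat, List.mem_append,
          List.mem_singleton] at h1
        rcases h1 with h1 | h1
        · rw [← h] at h1; exact absurd h1 h2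
        · exact h1.symm
      have hyv : y = p v := by
        rw [← hpav, h]
        exact paCongr x v hxr hv hxv
      exact Dart.ext _ _ (Prod.ext hxv hyv)
    · exfalso
      apply h2
      rw [hSiff] at h1 ⊢
      rw [paEq y hyr, Walk.support_concat, List.mem_append]
      left; rw [← h]; exact h1
  have hcross' : ∀ d : G.Dart, d.fst ∉ S → d.snd ∈ S →
      d = (⟨(p v, v), hadj⟩ : G.Dart) := by
    intro d h1 h2
    have h3 : d.symm = (⟨(v, p v), hadj.symm⟩ : G.Dart) := hcross d.symm h2 h1
    have h4 := congrArg Dart.symm h3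
    rw [Dart.symm_symm] at h4
    exact h4
  -- walk index part
  have hbn : b < W.darts.length := by rw [hb]; exact List.idxOf_lt_length_iff.2 (hW' _)
  have han : a < W.darts.length := by rw [ha]; exact List.idxOf_lt_length_iff.2 (hW' _)
  have hgetIdx : ∀ (d : G.Dart) (i : ℕ) (hi : i < W.darts.length),
      i = W.darts.idxOf d → W.darts[i]'hi = d := by
    rintro d i hi rfl
    exact List.getElem_idxOf hi
  have hidx : ∀ (d : G.Dart) (i : ℕ) (hi : i < W.darts.length),
      W.darts[i]'hi = d → i = W.darts.idxOf d := by
    intro d i hi hd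
    have h2 : W.darts.idxOf d < W.darts.length := List.idxOf_lt_length_iff.2 (hW' d)
    have h3 : (fun j : Fin W.darts.length => W.darts[j.1]) ⟨i, hi⟩ =
        (fun j : Fin W.darts.length => W.darts[j.1]) ⟨_, h2⟩ := by
      simpa using hd.trans (hgetIdx d _ h2 rfl).symm
    exact congrArg Fin.val (List.nodup_iff_injective_getElem.mp hW h3)
  have hLa : W.darts[a]'han = (⟨(p v, v), hadj⟩ : G.Dart) := hgetIdx _ a han ha
  have hLb : W.darts[b]'hbn = (⟨(v, p v), hadj.symm⟩ : G.Dart) := hgetIdx _ b hbn hb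
  have hchain : ∀ i (h : i + 1 < W.darts.length),
      (W.darts[i]'(Nat.lt_of_succ_lt h)).snd = (W.darts[i+1]'h).fst := by
    have hc := W.isChain_dartAdj_darts
    rw [List.isChain_iff_getElem] at hc
    intro i h
    have := hc i (by omega)
    simpa [List.get_eq_getElem] using this
  have hlen : W.darts.length = W.support.length - 1 := by
    rw [W.length_darts, W.length_support]; omega
  have hfst : ∀ i (hi : i < W.darts.length),
      (W.darts[i]'hi).fst = W.support[i]'(by omega) := by
    intro i hi
    have h1 : (W.darts[i]'hi).fst = (W.darts.map (·.fst))[i]'(by simpa using hi) :=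
      (List.getElem_map (fun d : G.Dart => d.fst) (l := W.darts) (i := i)
        (h := by simpa using hi)).symm
    have h2 := List.getElem_of_eq W.map_fst_darts (by simpa using hi)
    have h3 := List.getElem_dropLast (xs := W.support) (i := i) (by
      rw [← W.map_fst_darts, List.length_map]; simpa using hi)
    exact (h1.trans h2).trans h3
  have hsnd : ∀ i (hi : i < W.darts.length),
      (W.darts[i]'hi).snd = W.support[i+1]'(by omega) := by
    intro i hi
    have h1 : (W.darts[i]'hi).snd = (W.darts.map (·.snd))[i]'(by simpa using hi) :=
      (List.getElem_map (fun d : G.Dart => d.snd) (l := W.darts) (i := i)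
        (h := by simpa using hi)).symm
    have h2 := List.getElem_of_eq W.map_snd_darts (by simpa using hi)
    have h3 := List.getElem_tail (l := W.support) (i := i) (by
      rw [← W.map_snd_darts, List.length_map]; simpa using hi)
    exact (h1.trans h2).trans h3
  have hfst0 : ∀ (h : 0 < W.darts.length), (W.darts[0]'h).fst = r := by
    intro h
    rw [hfst 0 h]
    exact (List.getElem_of_eq W.support_eq_cons (by omega)).trans rfl
  have hlst : ∀ (h : 0 < W.darts.length),
      (W.darts[W.darts.length - 1]'(by omega)).snd = r := by
    intro h
    rw [hsnd _ (by omega)]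
    have h2 : W.darts.length - 1 + 1 = W.support.length - 1 := by omega
    have h3 := W.getLast_support
    rw [List.getLast_eq_getElem] at h3
    calc W.support[W.darts.length - 1 + 1]'(by omega)
        = W.support[W.support.length - 1]'(by omega) := by
          congr 1
      _ = r := h3
  -- monotone regions
  have hlow : ∀ i, i ≤ a → ∀ hi : i < W.darts.length, (W.darts[i]'hi).fst ∉ S := by
    intro i
    induction i with
    | zero => intro _ hi; rw [hfst0 hi]; exact hrS
    | succ j ihj =>
      intro hja hi
      have hj : j < W.darts.length := by omega
      have h1 : (W.darts[j]'hj).fst ∉ S := ihj (by omega) hj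
      intro hmem
      rw [← hchain j hi] at hmem
      have h3 := hidx _ j hj (hcross' _ h1 hmem)
      rw [← ha] at h3
      omega
  have hmid : ∀ i, a < i → i ≤ b → ∀ hi : i < W.darts.length, (W.darts[i]'hi).fst ∈ S := by
    intro i
    induction i with
    | zero => omega
    | succ j ihj =>
      intro h1 h2 hi
      have hj : j < W.darts.length := by omega
      rw [← hchain j hi]
      by_cases hja : j = a
      · subst hja
        rw [hLa]
        exact hvS
      · have hfj := ihj (by omega) (by omega) hj
        by_contra hmem
        have h4 := hidx _ j hj (hcross _ hfj hmem)
        rw [← hb] at h4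
        omega
  have hab : a < b := by
    have h1 : (W.darts[b]'hbn).fst ∈ S := by rw [hLb]; exact hvS
    by_contra hba
    exact hlow b (by omega) hbn h1
  have hhigh : ∀ i, b < i → ∀ hi : i < W.darts.length, (W.darts[i]'hi).fst ∉ S := by
    intro i
    induction i with
    | zero => omega
    | succ j ihj =>
      intro h1 hi
      have hj : j < W.darts.length := by omega
      rw [← hchain j hi]
      by_cases hjb : j = b
      · subst hjb
        rw [hLb]
        exact hpvnS
      · have hfj := ihj (by omega) hj
        intro hmem
        have h4 := hidx _ j hj (hcross' _ hfj hmem)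
        rw [← ha] at h4
        omega
  have hchar : ∀ i (hi : i < W.darts.length),
      ((W.darts[i]'hi).fst ∈ S ∧ (W.darts[i]'hi).snd ∈ S) ↔ (a < i ∧ i < b) := by
    intro i hi
    constructor
    · rintro ⟨h1, h2⟩
      have hai : a < i := by
        by_contra h
        exact hlow i (by omega) hi h1
      have hib : ¬ b < i := fun hbi => hhigh i hbi hi h1
      have hine : i ≠ b := by
        rintro rfl
        rw [hLb] at h2
        exact hpvnS h2
      exact ⟨hai, by omega⟩
    · rintro ⟨h1, h2⟩
      have hi1 : i + 1 < W.darts.length := by omega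
      refine ⟨hmid i h1 (by omega) hi, ?_⟩
      rw [hchain i hi1]
      exact hmid (i+1) (by omega) (by omega) hi1
  -- counting
  letI : DecidableRel G.Adj := fun _ _ => Classical.dec _
  set Sf : Finset V := Finset.univ.filter (· ∈ S) with hSfdef
  set Df : Finset G.Dart := Finset.univ.filter (fun d => d.fst ∈ S ∧ d.snd ∈ S) with hDfdef
  have hDfIoo : (Finset.Ioo a b).card = Df.card := by
    refine Finset.card_bij
      (fun i hi => W.darts[i]'(lt_trans (Finset.mem_Ioo.mp hi).2 hbn)) ?_ ?_ ?_
    · intro i hi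
      simp only [hDfdef, Finset.mem_filter, Finset.mem_univ, true_and]
      exact (hchar i _).mpr (Finset.mem_Ioo.mp hi)
    · intro i1 hi1 i2 hi2 heq
      have h2 := List.nodup_iff_injective_getElem.mp hW
        (a₁ := ⟨i1, lt_trans (Finset.mem_Ioo.mp hi1).2 hbn⟩)
        (a₂ := ⟨i2, lt_trans (Finset.mem_Ioo.mp hi2).2 hbn⟩) heq
      exact congrArg Fin.val h2
    · intro d hd
      simp only [hDfdef, Finset.mem_filter, Finset.mem_univ, true_and] at hd
      have hlt : W.darts.idxOf d < W.darts.length := List.idxOf_lt_length_iff.2 (hW' d)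
      have hget : W.darts[W.darts.idxOf d]'hlt = d := List.getElem_idxOf hlt
      have hio := (hchar _ hlt).mp (by rw [hget]; exact hd)
      exact ⟨_, Finset.mem_Ioo.mpr hio, hget⟩
  set Tf : Finset V := Sf.erase v with hTfdef
  have hDT : Df.card = (Tf ×ˢ (Finset.univ : Finset Bool)).card := by
    refine Finset.card_bij
      (fun d hd => if h : ∃ hr : d.snd ≠ r, pa d.snd hr = d.fst then (d.snd, true)
        else (d.fst, false)) ?_ ?_ ?_
    · intro d hd
      simp only [hDfdef, Finset.mem_filter, Finset.mem_univ, true_and] at hd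
      obtain ⟨hd1, hd2⟩ := hd
      have hd2r : d.snd ≠ r := fun h => hrS (h ▸ hd2)
      split_ifs with h
      · obtain ⟨hr, hpa⟩ := h
        simp only [Finset.mem_product, Finset.mem_univ, and_true, hTfdef, Finset.mem_erase]
        refine ⟨?_, by simp [hSfdef, hd2]⟩
        intro hdv
        apply hpvnS
        have h5 : d.fst = p v := by
          rw [← hpa, paCongr d.snd v hr hv hdv, hpav]
        rw [← h5]
        exact hd1
      · rcases hCL d.fst d.snd d.adj hd2r with h6 | ⟨hfr, h6⟩
        · exact absurd ⟨hd2r, h6.symm⟩ h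
        · simp only [Finset.mem_product, Finset.mem_univ, and_true, hTfdef, Finset.mem_erase]
          refine ⟨?_, by simp [hSfdef, hd1]⟩
          intro hdv
          apply hpvnS
          have h5 : d.snd = p v := by
            rw [h6, paCongr d.fst v hfr hv hdv, hpav]
          rw [← h5]
          exact hd2
    · intro d1 hd1' d2 hd2' heq
      simp only [hDfdef, Finset.mem_filter, Finset.mem_univ, true_and] at hd1' hd2'
      have hd1r : d1.snd ≠ r := fun h => hrS (h ▸ hd1'.2)
      have hd2r : d2.snd ≠ r := fun h => hrS (h ▸ hd2'.2)
      split_ifs at heq with h1 h2 h2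
      · obtain ⟨hr1, hp1⟩ := h1
        obtain ⟨hr2, hp2⟩ := h2
        have hsnd_eq : d1.snd = d2.snd := (Prod.ext_iff.mp heq).1
        have hfst_eq : d1.fst = d2.fst := by
          rw [← hp1, ← hp2, paCongr d1.snd d2.snd hr1 hr2 hsnd_eq]
        exact Dart.ext _ _ (Prod.ext hfst_eq hsnd_eq)
      · exact absurd (Prod.ext_iff.mp heq).2 (by simp)
      · exact absurd (Prod.ext_iff.mp heq).2 (by simp)
      · rcases hCL d1.fst d1.snd d1.adj hd1r with h6 | ⟨hfr1, h6⟩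
        · exact absurd ⟨hd1r, h6.symm⟩ h1
        rcases hCL d2.fst d2.snd d2.adj hd2r with h7 | ⟨hfr2, h7⟩
        · exact absurd ⟨hd2r, h7.symm⟩ h2
        have hfst_eq : d1.fst = d2.fst := (Prod.ext_iff.mp heq).1
        have hsnd_eq : d1.snd = d2.snd := by
          rw [h6, h7, paCongr d1.fst d2.fst hfr1 hfr2 hfst_eq]
        exact Dart.ext _ _ (Prod.ext hfst_eq hsnd_eq)
    · rintro ⟨u, bb⟩ hm
      simp only [Finset.mem_product, Finset.mem_univ, and_true, hTfdef, Finset.mem_erase,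
        hSfdef, Finset.mem_filter] at hm
      obtain ⟨hunv, -, huS⟩ := hm
      have hur : u ≠ r := fun h => hrS (h ▸ huS)
      have hw := paAdj u hur
      have hpaUS : pa u hur ∈ S := hpaS u hur huS hunv
      cases bb
      · refine ⟨(⟨(u, pa u hur), hw.symm⟩ : G.Dart), ?_, ?_⟩
        · simp only [hDfdef, Finset.mem_filter, Finset.mem_univ, true_and]
          exact ⟨huS, hpaUS⟩
        · dsimp only
          rw [dif_neg]
          rintro ⟨hr, hcon⟩
          have e1 := hdep u hur
          have e2 := hdep (pa u hur) hr
          rw [hcon] at e2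
          omega
      · refine ⟨(⟨(pa u hur, u), hw⟩ : G.Dart), ?_, ?_⟩
        · simp only [hDfdef, Finset.mem_filter, Finset.mem_univ, true_and]
          exact ⟨hpaUS, huS⟩
        · dsimp only
          rw [dif_pos ⟨hur, rfl⟩]
  have hTcard : (Tf ×ˢ (Finset.univ : Finset Bool)).card = Tf.card * 2 := by
    simp [Finset.card_product]
  have hvSf : v ∈ Sf := by simp [hSfdef, hvS]
  have hTf : Tf.card = Sf.card - 1 := Finset.card_erase_of_mem hvSf
  have hSfpos : 0 < Sf.card := Finset.card_pos.mpr ⟨v, hvSf⟩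
  have hIoo : (Finset.Ioo a b).card = b - a - 1 := Nat.card_Ioo a b
  have hNat : Nat.card ↥S = Sf.card := by
    rw [Nat.card_coe_set_eq, Set.ncard_eq_toFinset_card']
    congr 1
    ext u
    simp [hSfdef]
  refine ⟨hab, ?_⟩
  rw [hNat]
  omega
end

section
/- Let G be a finite tree (a connected acyclic simple graph) with a distinguished root vertex r, and let W be a closed walk in G from r to r whose list of darts contains every dart of G exactly once. Then for any two vertices u, v both distinct from r, the vertex v lies on the unique path from r to u if and only if the index of the advance dart (p(v), v) in the dart list of W is at most the index of the advance dart (p(u), u) and the index of the retreat dart (u, p(u)) is at most the index of the retreat dart (v, p(v)). -/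
namespace EulerTourAux

open SimpleGraph

variable {V : Type*} [DecidableEq V] {G : SimpleGraph V}

theorem gec {α : Type*} {l : List α} {i j : ℕ} (h : i = j) (hi : i < l.length) :
    l[i]'hi = l[j]'(h ▸ hi) := by subst h; rfl

/-- The unique path from `r` to `w` in a tree. -/
noncomputable def thePath (hG : G.IsTree) (r w : V) : G.Path r w :=
  ((hG.isConnected.preconnected r w).some).toPath

lemma thePath_unique (hG : G.IsTree) {r w : V} (q : G.Path r w) : q = thePath hG r w :=
  hG.IsAcyclic.path_unique q _

lemma thePath_unique' (hG : G.IsTree) {r w : V} (q : G.Walk r w) (hq : q.IsPath) :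
    q = (thePath hG r w).val :=
  congrArg Subtype.val (thePath_unique hG ⟨q, hq⟩)

lemma thePath_self (hG : G.IsTree) (r : V) : (thePath hG r r).val = Walk.nil :=
  (thePath_unique' hG Walk.nil Walk.IsPath.nil).symm

lemma isPath_concat {r z w : V} {q : G.Walk r z} (hq : q.IsPath) (ha : G.Adj z w)
    (hw : w ∉ q.support) : (q.concat ha).IsPath := by
  rw [Walk.isPath_def, Walk.support_concat]
  rw [List.nodup_append]
  refine ⟨hq.support_nodup, List.nodup_singleton _, ?_⟩
  intro t ht s ht'
  simp only [List.mem_singleton] at ht'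
  rintro rfl; subst ht'; exact hw ht

lemma getLast_darts (hG : G.IsTree) {r w z : V} (hz : z ∈ (thePath hG r w).val.support)
    (ha : G.Adj z w) :
    (thePath hG r w).val.darts.getLast? = some ⟨(z, w), ha⟩ := by
  have hzw : z ≠ w := ha.ne
  set Q := (thePath hG r w).val with hQ
  have hQp : Q.IsPath := (thePath hG r w).prop
  have hnodup : Q.support.Nodup := hQp.support_nodup
  have hwtail : w ∈ (Q.dropUntil z hz).support.tail := by
    have h := (Q.dropUntil z hz).end_mem_support
    rw [Walk.support_eq_cons] at h
    rcases List.mem_cons.mp h with h | h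
    · exact absurd h.symm hzw
    · exact h
  have hwnot : w ∉ (Q.takeUntil z hz).support := by
    intro hmem
    have h := hnodup
    rw [← Q.take_spec hz, Walk.support_append] at h
    exact (List.disjoint_of_nodup_append h) hmem hwtail
  have hpath2 : ((Q.takeUntil z hz).concat ha).IsPath :=
    isPath_concat (hQp.takeUntil hz) ha hwnot
  have hval : (Q.takeUntil z hz).concat ha = Q := thePath_unique' hG _ hpath2
  rw [← hval, Walk.darts_concat]
  simp

lemma antisym (hG : G.IsTree) {r y z : V} (hyz : y ≠ z)
    (h1 : y ∈ (thePath hG r z).val.support) : z ∉ (thePath hG r y).val.support := by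
  set Q := (thePath hG r z).val with hQ
  have hQp : Q.IsPath := (thePath hG r z).prop
  have heq : (thePath hG r y).val = Q.takeUntil y h1 :=
    (thePath_unique' hG _ (hQp.takeUntil h1)).symm
  rw [heq]
  intro hmem
  have hztail : z ∈ (Q.dropUntil y h1).support.tail := by
    have h := (Q.dropUntil y h1).end_mem_support
    rw [Walk.support_eq_cons] at h
    rcases List.mem_cons.mp h with h | h
    · exact absurd h.symm hyz
    · exact h
  have h := hQp.support_nodup
  rw [← Q.take_spec h1, Walk.support_append] at h
  exact (List.disjoint_of_nodup_append h) hmem hztail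

lemma parent_mem (hG : G.IsTree) {r : V} {p : V → V}
    (hp' : ∀ (x : V) (_ : x ≠ r) (q : G.Path x r), p x ∈ q.val.support)
    {x : V} (hx : x ≠ r) : p x ∈ (thePath hG r x).val.support := by
  have h := hp' x hx (thePath hG r x).reverse
  simpa [Path.reverse, Walk.support_reverse] using h

lemma cut (hG : G.IsTree) {r : V} {p : V → V}
    (hp : ∀ x : V, x ≠ r → G.Adj (p x) x)
    (hp' : ∀ (x : V) (_ : x ≠ r) (q : G.Path x r), p x ∈ q.val.support)
    {x w w' : V} (hx : x ≠ r)
    (hxw : x ∈ (thePath hG r w).val.support)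
    (hxw' : x ∉ (thePath hG r w').val.support)
    (ha : G.Adj w w') : w = x ∧ w' = p x := by
  have hw : w ∉ (thePath hG r w').val.support := by
    intro hmem
    apply hxw'
    have heq : (thePath hG r w).val = (thePath hG r w').val.takeUntil w hmem :=
      (thePath_unique' hG _ ((thePath hG r w').prop.takeUntil hmem)).symm
    rw [heq] at hxw
    exact Walk.support_takeUntil_subset _ hmem hxw
  have hpath : (((thePath hG r w').val).concat ha.symm).IsPath :=
    isPath_concat (thePath hG r w').prop ha.symm hw
  have heq : (thePath hG r w).val = ((thePath hG r w').val).concat ha.symm :=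
    (thePath_unique' hG _ hpath).symm
  have hsupp : (thePath hG r w).val.support = (thePath hG r w').val.support ++ [w] := by
    rw [heq, Walk.support_concat]
  have hxeqw : w = x := by
    rw [hsupp, List.mem_append] at hxw
    rcases hxw with h | h
    · exact absurd h hxw'
    · exact (List.mem_singleton.mp h).symm
  subst hxeqw
  refine ⟨rfl, ?_⟩
  have hw'mem : w' ∈ (thePath hG r w).val.support := by
    rw [hsupp]
    exact List.mem_append_left _ (Walk.end_mem_support _)
  have hlast1 := getLast_darts hG hw'mem ha.symm
  have hlast2 := getLast_darts hG (parent_mem hG hp' hx) (hp w hx)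
  have h := hlast1.symm.trans hlast2
  simp only [Option.some.injEq, Dart.ext_iff, Prod.ext_iff] at h
  exact h.1

lemma not_self_mem_parent (hG : G.IsTree) {r : V} {p : V → V}
    (hp : ∀ x : V, x ≠ r → G.Adj (p x) x)
    (hp' : ∀ (x : V) (_ : x ≠ r) (q : G.Path x r), p x ∈ q.val.support)
    {x : V} (hx : x ≠ r) : x ∉ (thePath hG r (p x)).val.support :=
  antisym hG (hp x hx).ne (parent_mem hG hp' hx)

lemma walk_fst {r : V} (W : G.Walk r r) {i : ℕ} (h : i < W.darts.length) :
    (W.darts[i]'h).fst = W.support.getD i r := by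
  have h1 : i < W.support.length := by
    rw [Walk.length_support]; rw [Walk.length_darts] at h; omega
  have h2 : i < W.support.dropLast.length := by
    rw [List.length_dropLast]
    rw [Walk.length_support]; rw [Walk.length_darts] at h; omega
  rw [List.getD_eq_getElem _ _ h1]
  have hm := W.map_fst_darts
  calc (W.darts[i]'h).fst = (W.darts.map (·.fst))[i]'(by simpa using h) := by
        rw [List.getElem_map]
    _ = W.support.dropLast[i]'h2 := by simp_rw [hm]
    _ = W.support[i]'h1 := List.getElem_dropLast _

lemma walk_snd {r : V} (W : G.Walk r r) {i : ℕ} (h : i < W.darts.length) :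
    (W.darts[i]'h).snd = W.support.getD (i + 1) r := by
  have h1 : i + 1 < W.support.length := by
    rw [Walk.length_support]; rw [Walk.length_darts] at h; omega
  have h2 : i < W.support.tail.length := by
    rw [List.length_tail]
    rw [Walk.length_support]; rw [Walk.length_darts] at h; omega
  rw [List.getD_eq_getElem _ _ h1]
  have hm := W.map_snd_darts
  calc (W.darts[i]'h).snd = (W.darts.map (·.snd))[i]'(by simpa using h) := by
        rw [List.getElem_map]
    _ = W.support.tail[i]'h2 := by simp_rw [hm]
    _ = W.support[i + 1]'h1 := List.getElem_tail _

section Walks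

lemma interval (hG : G.IsTree) {r : V} (W : G.Walk r r)
    (hW : W.darts.Nodup) (hW' : ∀ d : G.Dart, d ∈ W.darts)
    {p : V → V}
    (hp : ∀ x : V, x ≠ r → G.Adj (p x) x)
    (hp' : ∀ (x : V) (_ : x ≠ r) (q : G.Path x r), p x ∈ q.val.support)
    {x : V} (hx : x ≠ r) :
    ∀ i ≤ W.darts.length,
      (x ∈ (thePath hG r (W.support.getD i r)).val.support ↔
        W.darts.idxOf (⟨(p x, x), hp x hx⟩ : G.Dart) < i ∧
          i ≤ W.darts.idxOf (⟨(x, p x), (hp x hx).symm⟩ : G.Dart)) := by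
  set n := W.darts.length with hn
  set adv : G.Dart := ⟨(p x, x), hp x hx⟩ with hadv
  set ret : G.Dart := ⟨(x, p x), (hp x hx).symm⟩ with hret
  set a := W.darts.idxOf adv with haidx
  set b := W.darts.idxOf ret with hbidx
  have ha_lt : a < n := List.idxOf_lt_length_iff.mpr (hW' adv)
  have hb_lt : b < n := List.idxOf_lt_length_iff.mpr (hW' ret)
  have getA : W.darts[a]'ha_lt = adv := List.getElem_idxOf ha_lt
  have getB : W.darts[b]'hb_lt = ret := List.getElem_idxOf hb_lt
  have hxp : p x ≠ x := (hp x hx).ne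
  intro i
  induction i using Nat.strong_induction_on with
  | _ i IH =>
    intro hi
    match i, hi with
    | 0, hi =>
      have hsup0 : W.support.getD 0 r = r := by
        rw [Walk.support_eq_cons]; rfl
      rw [hsup0, thePath_self hG r]
      simp [hx]
    | (j + 1), hi =>
      have hjn : j < n := by omega
      by_cases hja : j = a
      · -- advance step
        have hdj : W.darts[j]'hjn = adv := (gec hja hjn).trans getA
        have hsup : W.support.getD (j + 1) r = x := by
          rw [← walk_snd W hjn, hdj]
        rw [hsup]
        have hab : j < b := by
          rcases Nat.lt_or_ge j b with h | h
          · exact h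
          exfalso
          have hne : b ≠ j := by
            intro heq
            have hre : ret = adv := by rw [← getB, ← hdj]; exact gec heq hb_lt
            exact hxp (congrArg (fun d => d.toProd.1) hre).symm
          have hblt : b < j := by omega
          have IHb := IH b (by omega) (by omega)
          have hsupb : W.support.getD b r = x := by
            rw [← walk_fst W hb_lt, getB]
          rw [hsupb] at IHb
          have := (IHb.mp (Walk.end_mem_support _)).1
          omega
        exact ⟨fun _ => ⟨by omega, by omega⟩, fun _ => Walk.end_mem_support _⟩
      · by_cases hjb : j = b
        · -- retreat step
          have hdj : W.darts[j]'hjn = ret := (gec hjb hjn).trans getB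
          have hsup : W.support.getD (j + 1) r = p x := by
            rw [← walk_snd W hjn, hdj]
          rw [hsup]
          constructor
          · intro h
            exact absurd h (not_self_mem_parent hG hp hp' hx)
          · intro h
            omega
        · -- generic step
          have IHj := IH j (by omega) (by omega)
          have hadj : G.Adj (W.support.getD j r) (W.support.getD (j + 1) r) := by
            rw [← walk_fst W hjn, ← walk_snd W hjn]
            exact (W.darts[j]'hjn).adj
          have key : x ∈ (thePath hG r (W.support.getD (j + 1) r)).val.support ↔
              x ∈ (thePath hG r (W.support.getD j r)).val.support := by
            constructor
            · intro h
              by_contra h2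
              obtain ⟨he1, he2⟩ := cut hG hp hp' hx h h2 hadj.symm
              apply hja
              refine (hW.getElem_inj_iff (hi := hjn) (hj := ha_lt)).mp ?_
              rw [getA]
              refine Dart.ext _ _ (Prod.ext ?_ ?_)
              · rw [walk_fst W hjn]; exact he2
              · rw [walk_snd W hjn]; exact he1
            · intro h
              by_contra h2
              obtain ⟨he1, he2⟩ := cut hG hp hp' hx h h2 hadj
              apply hjb
              refine (hW.getElem_inj_iff (hi := hjn) (hj := hb_lt)).mp ?_
              rw [getB]
              refine Dart.ext _ _ (Prod.ext ?_ ?_)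
              · rw [walk_fst W hjn]; exact he1
              · rw [walk_snd W hjn]; exact he2
          rw [key, IHj]
          omega

end Walks

end EulerTourAux

open EulerTourAux SimpleGraph in
/-- Let `G` be a finite tree rooted at `r` and let `W` be a closed walk from `r` to `r`
whose list of darts contains every dart of `G` exactly once (an Euler tour), and let
`p x` be the parent of each vertex `x ≠ r` (the neighbor of `x` lying on every path
from `x` to `r`).  Then for vertices `u, v ≠ r`, `v` lies on the unique path from `r`
to `u` if and only if the index of the advance dart `(p v, v)` in `W.darts` is at most
the index of the advance dart `(p u, u)`, and the index of the retreat dart `(u, p u)`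
is at most the index of the retreat dart `(v, p v)`. -/
theorem stmt_6 {V : Type*} [Fintype V] [DecidableEq V] (G : SimpleGraph V)
    (hG : G.IsTree) (r : V) (W : G.Walk r r)
    (hW : W.darts.Nodup) (hW' : ∀ d : G.Dart, d ∈ W.darts)
    (p : V → V)
    (hp : ∀ x : V, x ≠ r → G.Adj (p x) x)
    (hp' : ∀ (x : V) (_ : x ≠ r) (q : G.Path x r), p x ∈ q.val.support)
    (u v : V) (hu : u ≠ r) (hv : v ≠ r) :
    (∀ q : G.Path r u, v ∈ q.val.support) ↔
      (W.darts.idxOf (⟨(p v, v), hp v hv⟩ : G.Dart) ≤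
          W.darts.idxOf (⟨(p u, u), hp u hu⟩ : G.Dart) ∧
        W.darts.idxOf (⟨(u, p u), (hp u hu).symm⟩ : G.Dart) ≤
          W.darts.idxOf (⟨(v, p v), (hp v hv).symm⟩ : G.Dart)) := by
  have hLHS : (∀ q : G.Path r u, v ∈ q.val.support) ↔
      v ∈ (thePath hG r u).val.support :=
    ⟨fun h => h _, fun h q => by rw [thePath_unique hG q]; exact h⟩
  rw [hLHS]
  set au := W.darts.idxOf (⟨(p u, u), hp u hu⟩ : G.Dart) with hau
  set bu := W.darts.idxOf (⟨(u, p u), (hp u hu).symm⟩ : G.Dart) with hbu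
  have hau_lt : au < W.darts.length := List.idxOf_lt_length_iff.mpr (hW' _)
  have hbu_lt : bu < W.darts.length := List.idxOf_lt_length_iff.mpr (hW' _)
  have hsup1 : W.support.getD (au + 1) r = u := by
    rw [← walk_snd W hau_lt, List.getElem_idxOf hau_lt]
  have hsup2 : W.support.getD bu r = u := by
    rw [← walk_fst W hbu_lt, List.getElem_idxOf hbu_lt]
  constructor
  · intro h
    have h1 := (interval hG W hW hW' hp hp' hv (au + 1) (by omega)).mp
      (by rw [hsup1]; exact h)
    have h2 := (interval hG W hW hW' hp hp' hv bu (by omega)).mp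
      (by rw [hsup2]; exact h)
    exact ⟨by omega, h2.2⟩
  · rintro ⟨h1, h2⟩
    have habu : au < bu :=
      ((interval hG W hW hW' hp hp' hu bu (by omega)).mp
        (by rw [hsup2]; exact Walk.end_mem_support _)).1
    have hm := (interval hG W hW hW' hp hp' hv (au + 1) (by omega)).mpr
      ⟨by omega, by omega⟩
    rw [hsup1] at hm
    exact hm
end

section
/- Let G be a finite biconnected simple graph on n ≥ 3 vertices, and let {s, t} be an edge of G. Then there exists an st-numbering of G, i.e., a bijection ℓ from the vertex set of G onto {1, 2, ..., n} such that ℓ(s) = 1, ℓ(t) = n, and every vertex v other than s and t is adjacent in G to two vertices u and w with ℓ(u) ≤ ℓ(v) ≤ ℓ(w). -/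
set_option linter.unusedSectionVars false
open List

section aux
variable {α : Type*}

lemma chain'_tail_witness {R : α → α → Prop} :
    ∀ {M : List α}, List.Chain' R M → ∀ x ∈ M.tail, ∃ y, R y x ∧ [y, x] <+ M := by
  intro M
  induction M with
  | nil => intro _ x hx; simp at hx
  | cons a rest ih =>
    intro hch x hx
    simp only [List.tail_cons] at hx
    match rest, hx with
    | b :: rest2, hx =>
      rcases List.isChain_cons_cons.mp hch with ⟨hab, hch'⟩
      by_cases hxb : x = b
      · subst hxb
        exact ⟨a, hab, by simp [List.Sublist.cons₂, List.cons_sublist_cons]⟩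
      · have hx2 : x ∈ (b :: rest2).tail := by
          rcases List.mem_cons.mp hx with h | h
          · exact absurd h hxb
          · simpa using h
        obtain ⟨y, hy, hsub⟩ := ih hch' x hx2
        exact ⟨y, hy, hsub.trans (List.sublist_cons_self _ _)⟩

lemma chain'_dropLast_witness {R : α → α → Prop} :
    ∀ {M : List α}, List.Chain' R M → ∀ x ∈ M.dropLast, ∃ y, R x y ∧ [x, y] <+ M := by
  intro M
  induction M with
  | nil => intro _ x hx; simp at hx
  | cons a rest ih =>
    intro hch x hx
    match rest, hx with
    | b :: rest2, hx =>
      rcases List.isChain_cons_cons.mp hch with ⟨hab, hch'⟩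
      rw [List.dropLast_cons₂] at hx
      rcases List.mem_cons.mp hx with h | h
      · subst h
        exact ⟨b, hab, by simp [List.Sublist.cons₂, List.cons_sublist_cons]⟩
      · obtain ⟨y, hy, hsub⟩ := ih hch' x h
        exact ⟨y, hy, hsub.trans (List.sublist_cons_self _ _)⟩

lemma pair_sublist_idxOf [DecidableEq α] {a b : α} :
    ∀ {l : List α}, l.Nodup → [a, b] <+ l → l.idxOf a < l.idxOf b := by
  intro l
  induction l with
  | nil => intro _ h; exact absurd h (by simp)
  | cons c l' ih =>
    intro hnd hsub
    rcases hsub with _ | _ | _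
    case cons h =>
      rename_i h
      have ha : a ∈ l' := h.subset (by simp)
      have hb : b ∈ l' := h.subset (by simp)
      have hca : c ≠ a := fun e => (List.nodup_cons.mp hnd).1 (e ▸ ha)
      have hcb : c ≠ b := fun e => (List.nodup_cons.mp hnd).1 (e ▸ hb)
      rw [List.idxOf_cons_ne _ hca, List.idxOf_cons_ne _ hcb]
      exact Nat.succ_lt_succ (ih (List.nodup_cons.mp hnd).2 h)
    case cons_cons h =>
      rename_i h
      have hb : b ∈ l' := h.subset (by simp)
      have hab : a ≠ b := fun e => (List.nodup_cons.mp hnd).1 (e ▸ hb)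
      rw [List.idxOf_cons_self, List.idxOf_cons_ne _ hab]
      exact Nat.succ_pos _

lemma head?_append_cons (A : List α) (u : α) (m m' : List α) :
    (A ++ u :: m).head? = (A ++ u :: m').head? := by
  cases A <;> simp

end aux

section graph

variable {V : Type*} [Fintype V] [DecidableEq V]

/-- crossing lemma : a walk from inside S to outside S has an edge crossing. -/
lemma stnum_crossing {G : SimpleGraph V} {S : V → Prop} :
    ∀ {a b : V}, G.Walk a b → S a → ¬ S b → ∃ u x, S u ∧ ¬ S x ∧ G.Adj u x := by
  intro a b W
  induction W with
  | nil => intro h h'; exact absurd h h'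
  | @cons a c b h W ih =>
    intro ha hb
    by_cases hc : S c
    · exact ih hc hb
    · exact ⟨a, c, ha, hc, h⟩

lemma stnum_findPath {α : Type*} {H : SimpleGraph α} {S : α → Prop} :
    ∀ {a b : α} (W : H.Walk a b), W.IsPath → ¬ S a → S b →
    ∃ (P : List α) (y w : α), P ≠ [] ∧ P.Nodup ∧ P.head? = some a ∧
      (∀ p ∈ P, ¬ S p) ∧ (∀ p ∈ P, p ∈ W.support) ∧ List.Chain' H.Adj P ∧
      P.getLast? = some y ∧ S w ∧ H.Adj y w := by
  intro a b W
  induction W with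
  | nil => intro _ ha hb; exact absurd hb ha
  | @cons a c b h W ih =>
    intro hp ha hb
    rcases (SimpleGraph.Walk.cons_isPath_iff h W).mp hp with ⟨hWp, hans⟩
    by_cases hc : S c
    · exact ⟨[a], a, c, by simp, by simp, rfl, by simpa using ha, by simp, List.isChain_singleton a, rfl, hc, h⟩
    · obtain ⟨P, y, w, hne, hnd, hhd, hS, hmem, hch, hlast, hw, hadj⟩ := ih hWp hc hb
      refine ⟨a :: P, y, w, by simp, ?_, rfl, ?_, ?_, ?_, ?_, hw, hadj⟩
      · exact List.nodup_cons.mpr ⟨fun hmem' => hans (hmem _ hmem'), hnd⟩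
      · intro p hp'
        rcases List.mem_cons.mp hp' with rfl | hp'
        · exact ha
        · exact hS p hp'
      · intro p hp'
        rcases List.mem_cons.mp hp' with rfl | hp'
        · simp [SimpleGraph.Walk.support_cons]
        · simp [SimpleGraph.Walk.support_cons, hmem p hp']
      · exact List.isChain_cons.mpr ⟨fun z hz => by rw [hhd] at hz; exact (Option.mem_some_iff.mp hz) ▸ h, hch⟩
      · cases P with
        | nil => exact absurd rfl hne
        | cons q P' => rw [List.getLast?_cons_cons]; exact hlast
end graph

section graph2
variable {V : Type*} [Fintype V] [DecidableEq V]

/-- The invariant: a partial st-ordering as a list. -/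
def GoodList (G : SimpleGraph V) (s t : V) (L : List V) : Prop :=
  L.Nodup ∧ L.head? = some s ∧ L.getLast? = some t ∧
  (∀ v ∈ L, v ≠ s → ∃ u, G.Adj v u ∧ [u, v] <+ L) ∧
  (∀ v ∈ L, v ≠ t → ∃ w, G.Adj v w ∧ [v, w] <+ L)

lemma insert_good {G : SimpleGraph V} {s t : V} {L : List V} (hL : GoodList G s t L)
    {u : V} (hu : u ∈ L) {Pv : List V} (hPne : Pv ≠ []) (hPnd : Pv.Nodup)
    (hPdisj : ∀ p ∈ Pv, p ∉ L) (hch : List.Chain' G.Adj Pv)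
    {x y w : V} (hhd : Pv.head? = some x) (hlast : Pv.getLast? = some y)
    (hux : G.Adj u x) (hyw : G.Adj y w) (hwL : w ∈ L) (hwu : w ≠ u) :
    ∃ L', GoodList G s t L' ∧ L.length < L'.length := by
  obtain ⟨hnd, hhdL, hlstL, hleft, hright⟩ := hL
  obtain ⟨A, B, hAB⟩ := List.append_of_mem hu
  have hwAB : w ∈ A ∨ w ∈ B := by
    rw [hAB] at hwL
    rcases List.mem_append.mp hwL with h | h
    · exact Or.inl h
    · rcases List.mem_cons.mp h with rfl | h
      · exact absurd rfl hwu
      · exact Or.inr h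
  have hlenP : 0 < Pv.length := List.length_pos_iff.mpr hPne
  rcases hwAB with hwA | hwB
  · -- case 2: w before u; insert Pv.reverse before u
    refine ⟨A ++ (Pv.reverse ++ u :: B), ?_, ?_⟩
    swap
    · rw [hAB]; simp; omega
    have hsub : L <+ A ++ (Pv.reverse ++ u :: B) := by
      rw [hAB]
      exact (List.sublist_append_right Pv.reverse (u :: B)).append_left A
    have hperm : (A ++ (Pv.reverse ++ u :: B)) ~ L ++ Pv := by
      rw [hAB, List.append_assoc]
      refine List.Perm.append_left A ?_
      exact List.perm_append_comm.trans ((Pv.reverse_perm).append_left (u :: B))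
    have hnd' : (A ++ (Pv.reverse ++ u :: B)).Nodup := by
      refine hperm.nodup_iff.mpr (List.nodup_append.mpr ⟨hnd, hPnd, ?_⟩)
      intro a haL b hbP hab
      exact hPdisj b hbP (hab ▸ haL)
    have hchrev : List.Chain' G.Adj Pv.reverse :=
      List.isChain_reverse.mpr (hch.imp fun a b hab => hab.symm)
    have hchW : List.Chain' G.Adj (w :: Pv.reverse) := by
      refine List.isChain_cons.mpr ⟨?_, hchrev⟩
      intro z hz
      rw [List.head?_reverse, hlast] at hz
      exact (Option.mem_some_iff.mp hz) ▸ hyw.symm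
    have hchU : List.Chain' G.Adj (Pv.reverse ++ [u]) := by
      refine List.isChain_append.mpr ⟨hchrev, List.isChain_singleton u, ?_⟩
      intro z hz q hq
      rw [List.getLast?_reverse, hhd] at hz
      simp only [List.head?_cons, Option.mem_some_iff] at hq
      exact (Option.mem_some_iff.mp hz) ▸ hq ▸ hux.symm
    obtain ⟨A1, A2, hA12⟩ := List.append_of_mem hwA
    have hLeq : A ++ (Pv.reverse ++ u :: B) = A1 ++ w :: (A2 ++ (Pv.reverse ++ u :: B)) := by
      rw [hA12]; simp
    have hWsub : (w :: Pv.reverse) <+ A ++ (Pv.reverse ++ u :: B) := by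
      rw [hLeq]
      refine List.Sublist.trans ?_ (List.sublist_append_right A1 _)
      exact ((List.sublist_append_left Pv.reverse (u :: B)).trans
        (List.sublist_append_right A2 _)).cons₂ w
    have hUsub : (Pv.reverse ++ [u]) <+ A ++ (Pv.reverse ++ u :: B) := by
      refine List.Sublist.trans ?_ (List.sublist_append_right A _)
      exact List.Sublist.append_left ((List.nil_sublist B).cons₂ u) Pv.reverse
    have hmem' : ∀ v ∈ A ++ (Pv.reverse ++ u :: B), v ∈ L ∨ v ∈ Pv := by
      intro v hv
      exact List.mem_append.mp (hperm.subset hv)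
    refine ⟨hnd', ?_, ?_, ?_, ?_⟩
    · -- head
      have hAne : A ≠ [] := List.ne_nil_of_mem hwA
      obtain ⟨a0, A', rfl⟩ := List.exists_cons_of_ne_nil hAne
      rw [hAB] at hhdL
      simpa using hhdL
    · -- last
      rw [show A ++ (Pv.reverse ++ u :: B) = (A ++ Pv.reverse) ++ u :: B by simp,
        List.getLast?_append_cons]
      rw [hAB, List.getLast?_append_cons] at hlstL
      exact hlstL
    · -- left witnesses
      intro v hv hvs
      rcases hmem' v hv with hvL | hvP
      · obtain ⟨u', hadj, hsubp⟩ := hleft v hvL hvs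
        exact ⟨u', hadj, hsubp.trans hsub⟩
      · obtain ⟨y', hy', hsubp⟩ := chain'_tail_witness hchW v (by simpa using hvP)
        exact ⟨y', hy'.symm, hsubp.trans hWsub⟩
    · -- right witnesses
      intro v hv hvt
      rcases hmem' v hv with hvL | hvP
      · obtain ⟨w', hadj, hsubp⟩ := hright v hvL hvt
        exact ⟨w', hadj, hsubp.trans hsub⟩
      · obtain ⟨y', hy', hsubp⟩ := chain'_dropLast_witness hchU v
          (by rw [List.dropLast_concat]; simpa using hvP)
        exact ⟨y', hy', hsubp.trans hUsub⟩
  · -- case 1: w after u; insert Pv after u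
    refine ⟨A ++ u :: (Pv ++ B), ?_, ?_⟩
    swap
    · rw [hAB]; simp; omega
    have hsub : L <+ A ++ u :: (Pv ++ B) := by
      rw [hAB]
      exact ((List.sublist_append_right Pv B).cons₂ u).append_left A
    have hperm : (A ++ u :: (Pv ++ B)) ~ L ++ Pv := by
      rw [hAB, List.append_assoc, List.cons_append]
      exact ((List.perm_append_comm).cons u).append_left A
    have hnd' : (A ++ u :: (Pv ++ B)).Nodup := by
      refine hperm.nodup_iff.mpr (List.nodup_append.mpr ⟨hnd, hPnd, ?_⟩)
      intro a haL b hbP hab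
      exact hPdisj b hbP (hab ▸ haL)
    have hchW : List.Chain' G.Adj (u :: Pv) := by
      refine List.isChain_cons.mpr ⟨?_, hch⟩
      intro z hz
      rw [hhd] at hz
      exact (Option.mem_some_iff.mp hz) ▸ hux
    have hchU : List.Chain' G.Adj (Pv ++ [w]) := by
      refine List.isChain_append.mpr ⟨hch, List.isChain_singleton w, ?_⟩
      intro z hz q hq
      rw [hlast] at hz
      simp only [List.head?_cons, Option.mem_some_iff] at hq
      exact (Option.mem_some_iff.mp hz) ▸ hq ▸ hyw
    have hWsub : (u :: Pv) <+ A ++ u :: (Pv ++ B) := by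
      exact ((List.sublist_append_left Pv B).cons₂ u).trans
        (List.sublist_append_right A _)
    have hUsub : (Pv ++ [w]) <+ A ++ u :: (Pv ++ B) := by
      refine List.Sublist.trans ?_ (List.sublist_append_right A _)
      refine List.Sublist.trans ?_ (List.sublist_cons_self u _)
      exact List.Sublist.append_left (List.singleton_sublist.mpr hwB) Pv
    have hmem' : ∀ v ∈ A ++ u :: (Pv ++ B), v ∈ L ∨ v ∈ Pv := by
      intro v hv
      exact List.mem_append.mp (hperm.subset hv)
    have hBne : B ≠ [] := List.ne_nil_of_mem hwB
    refine ⟨hnd', ?_, ?_, ?_, ?_⟩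
    · rw [head?_append_cons A u (Pv ++ B) B, ← hAB]
      exact hhdL
    · rw [show A ++ u :: (Pv ++ B) = (A ++ u :: Pv) ++ B by simp,
        List.getLast?_append_of_ne_nil _ hBne]
      rw [hAB, show A ++ u :: B = (A ++ [u]) ++ B by simp,
        List.getLast?_append_of_ne_nil _ hBne] at hlstL
      exact hlstL
    · intro v hv hvs
      rcases hmem' v hv with hvL | hvP
      · obtain ⟨u', hadj, hsubp⟩ := hleft v hvL hvs
        exact ⟨u', hadj, hsubp.trans hsub⟩
      · obtain ⟨y', hy', hsubp⟩ := chain'_tail_witness hchW v (by simpa using hvP)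
        exact ⟨y', hy'.symm, hsubp.trans hWsub⟩
    · intro v hv hvt
      rcases hmem' v hv with hvL | hvP
      · obtain ⟨w', hadj, hsubp⟩ := hright v hvL hvt
        exact ⟨w', hadj, hsubp.trans hsub⟩
      · obtain ⟨y', hy', hsubp⟩ := chain'_dropLast_witness hchU v
          (by rw [List.dropLast_concat]; exact hvP)
        exact ⟨y', hy', hsubp.trans hUsub⟩

end graph2

section graph3
variable {V : Type*} [Fintype V] [DecidableEq V]

lemma stnum_extend {G : SimpleGraph V} (hconn : G.Connected)
    (hbi : ∀ v : V, (G.induce ({v}ᶜ : Set V)).Connected)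
    {s t : V} (hstne : s ≠ t) {L : List V} (hL : GoodList G s t L)
    {v0 : V} (hv0 : v0 ∉ L) :
    ∃ L', GoodList G s t L' ∧ L.length < L'.length := by
  have hsL : s ∈ L := by
    cases L with
    | nil => exact absurd hL.2.1 (by simp)
    | cons a l =>
      have : a = s := by simpa using hL.2.1
      exact this ▸ List.mem_cons_self
  have htL : t ∈ L := List.mem_of_getLast? hL.2.2.1
  obtain ⟨u, x, huL, hxL, hux⟩ :
      ∃ u x, u ∈ L ∧ x ∉ L ∧ G.Adj u x :=
    ((hconn s v0).elim fun W => stnum_crossing (S := (· ∈ L)) W hsL hv0)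
  have hxu : x ≠ u := fun e => hxL (e ▸ huL)
  set c := if u = s then t else s with hc
  have hcL : c ∈ L := by rw [hc]; split <;> assumption
  have hcu : c ≠ u := by
    rw [hc]; split
    · rename_i h; rw [h]; exact (Ne.symm hstne)
    · rename_i h; exact fun e => h e.symm
  have hxmem : x ∈ ({u}ᶜ : Set V) := by simp [hxu]
  have hcmem : c ∈ ({u}ᶜ : Set V) := by simp [hcu]
  have hR : ((G.induce ({u}ᶜ : Set V))).Reachable ⟨x, hxmem⟩ ⟨c, hcmem⟩ :=
    ((hbi u).preconnected) _ _
  refine hR.elim fun W0 => ?_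
  obtain ⟨P, y, w, hne, hnd', hhd', hS, hmemW, hch, hlast', hw, hadj⟩ :=
    stnum_findPath (S := fun z : ({u}ᶜ : Set V) => (z : V) ∈ L)
      (W0.toPath : (G.induce ({u}ᶜ : Set V)).Path _ _).1
      (W0.toPath).2 (by simpa using hxL) (by simpa using hcL)
  set f : ({u}ᶜ : Set V) → V := fun z => (z : V) with hf
  have hinj : Function.Injective f := Subtype.val_injective
  refine insert_good ⟨hL.1, hL.2.1, hL.2.2.1, hL.2.2.2.1, hL.2.2.2.2⟩ huL
    (Pv := P.map f) (x := x) (y := (y : V)) (w := (w : V))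
    (fun h => hne (List.map_eq_nil_iff.mp h)) (hnd'.map hinj) ?_ ?_ ?_ ?_ hux ?_ hw w.2
  · intro p hp
    obtain ⟨z, hz, rfl⟩ := List.mem_map.mp hp
    exact hS z hz
  · refine (List.isChain_map f).mpr ?_
    exact hch.imp fun a b hab => hab
  · rw [List.head?_map, hhd']; rfl
  · rw [List.getLast?_map, hlast']; rfl
  · exact hadj

end graph3

section graph4
variable {V : Type*} [Fintype V] [DecidableEq V]

lemma stnum_cover {G : SimpleGraph V} (hconn : G.Connected)
    (hbi : ∀ v : V, (G.induce ({v}ᶜ : Set V)).Connected)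
    {s t : V} (hstne : s ≠ t) :
    ∀ (k : ℕ) (L : List V), GoodList G s t L → Fintype.card V ≤ L.length + k →
    ∃ L', GoodList G s t L' ∧ ∀ v : V, v ∈ L' := by
  intro k
  induction k with
  | zero =>
    intro L hL hlen
    refine ⟨L, hL, ?_⟩
    have hcard : L.toFinset = Finset.univ := by
      refine Finset.eq_univ_of_card _ (le_antisymm (Finset.card_le_univ _) ?_)
      rw [List.toFinset_card_of_nodup hL.1]
      simpa using hlen
    intro v
    rw [← List.mem_toFinset, hcard]
    exact Finset.mem_univ v
  | succ k ih =>
    intro L hL hlen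
    by_cases hall : ∀ v : V, v ∈ L
    · exact ⟨L, hL, hall⟩
    · push_neg at hall
      obtain ⟨v0, hv0⟩ := hall
      obtain ⟨L', hL', hlt⟩ := stnum_extend hconn hbi hstne hL hv0
      exact ih L' hL' (by omega)

end graph4

/-- Let `G` be a finite biconnected simple graph on `n ≥ 3` vertices and let `{s, t}`
be an edge of `G`.  Then `G` has an st-numbering: a bijection `ℓ` from the vertices
onto `{1, ..., n}` with `ℓ s = 1`, `ℓ t = n`, and every other vertex `v` adjacent to
vertices `u` and `w` with `ℓ u ≤ ℓ v ≤ ℓ w`. -/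
theorem stmt_8 {V : Type*} [Fintype V] [DecidableEq V] (G : SimpleGraph V)
    (hconn : G.Connected)
    (hbi : ∀ v : V, (G.induce ({v}ᶜ : Set V)).Connected)
    (hcard : 3 ≤ Fintype.card V)
    (s t : V) (hst : G.Adj s t) :
    ∃ ℓ : V → ℕ, Function.Injective ℓ ∧
      Set.range ℓ = Set.Icc 1 (Fintype.card V) ∧
      ℓ s = 1 ∧ ℓ t = Fintype.card V ∧
      ∀ v : V, v ≠ s → v ≠ t →
        ∃ u w : V, G.Adj v u ∧ G.Adj v w ∧ ℓ u ≤ ℓ v ∧ ℓ v ≤ ℓ w := by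
  have hstne : s ≠ t := hst.ne
  have hgood0 : GoodList G s t [s, t] := by
    refine ⟨by simp [hstne], rfl, rfl, ?_, ?_⟩
    · intro v hv hvs
      have hvt : v = t := by
        rcases List.mem_cons.mp hv with rfl | hv
        · exact absurd rfl hvs
        · simpa using hv
      subst hvt
      exact ⟨s, hst.symm, List.Sublist.refl _⟩
    · intro v hv hvt
      have hvs : v = s := by
        rcases List.mem_cons.mp hv with rfl | hv
        · rfl
        · exact absurd (by simpa using hv) hvt
      subst hvs
      exact ⟨t, hst, List.Sublist.refl _⟩
  obtain ⟨L, hL, hall⟩ := stnum_cover hconn hbi hstne (Fintype.card V) [s, t] hgood0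
    (by simp)
  have hnd := hL.1
  have hlenL : L.length = Fintype.card V := by
    have h1 : L.toFinset = Finset.univ :=
      Finset.eq_univ_iff_forall.mpr fun v => List.mem_toFinset.mpr (hall v)
    rw [← List.toFinset_card_of_nodup hnd, h1, Finset.card_univ]
  refine ⟨fun v => L.idxOf v + 1, ?_, ?_, ?_, ?_, ?_⟩
  · intro a b hab
    simp only [Nat.add_right_cancel_iff] at hab
    exact (List.idxOf_inj (hall a)).mp hab
  · ext m
    simp only [Set.mem_range, Set.mem_Icc]
    constructor
    · rintro ⟨v, rfl⟩
      have := List.idxOf_lt_length_iff.mpr (hall v)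
      omega
    · rintro ⟨h1, h2⟩
      have hm : m - 1 < L.length := by omega
      refine ⟨L.get ⟨m - 1, hm⟩, ?_⟩
      rw [List.get_eq_getElem, hnd.idxOf_getElem]
      show m - 1 + 1 = m
      omega
  · -- ℓ s = 1
    cases L with
    | nil => exact absurd hL.2.1 (by simp)
    | cons a l =>
      have : a = s := by simpa using hL.2.1
      subst this
      simp
  · -- ℓ t = n
    obtain ⟨M, hM⟩ := List.getLast?_eq_some_iff.mp hL.2.2.1
    rw [hM] at hnd hlenL ⊢
    have htM : t ∉ M := fun h => (List.nodup_append.mp hnd).2.2 t h t (by simp) rfl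
    show List.idxOf t (M ++ [t]) + 1 = Fintype.card V
    rw [List.idxOf_append_of_notMem htM]
    simp only [List.idxOf_cons_self]
    simp only [List.length_append, List.length_singleton] at hlenL
    omega
  · intro v hvs hvt
    obtain ⟨u', hadju, hsubu⟩ := hL.2.2.2.1 v (hall v) hvs
    obtain ⟨w', hadjw, hsubw⟩ := hL.2.2.2.2 v (hall v) hvt
    have h1 := pair_sublist_idxOf hnd hsubu
    have h2 := pair_sublist_idxOf hnd hsubw
    have e1 : L.idxOf u' + 1 ≤ L.idxOf v + 1 := by omega
    have e2 : L.idxOf v + 1 ≤ L.idxOf w' + 1 := by omega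
    exact ⟨u', w', hadju, hadjw, e1, e2⟩
end

section
/- Let G be a finite biconnected simple graph on at least 3 vertices, and let {s, t} be an edge of G. Then G admits an open ear decomposition starting with the edge {s, t}: a finite sequence P_0, P_1, ..., P_k of simple paths in G (the ears) whose edge sets partition the edge set of G, such that P_0 consists of the single edge {s, t}, and for each j ≥ 1 the internal vertices of P_j are disjoint from all vertices of P_0, ..., P_{j−1}, each of the two endpoints of P_j is a vertex of some earlier ear P_i with i < j, and the two endpoints of P_j are distinct. -/
section EarDecompAux

open SimpleGraph

variable {V : Type*}

private lemma walk_prefix_to_set {G : SimpleGraph V} (S : Set V) :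
    ∀ {v w0 : V} (p : G.Walk v w0), w0 ∈ S →
      ∃ w, w ∈ S ∧ ∃ q : G.Walk v w,
        (∀ x ∈ q.support, x ∈ p.support) ∧ (∀ x ∈ q.support, x ≠ w → x ∉ S) := by
  intro v w0 p
  induction p with
  | nil =>
    intro h
    exact ⟨_, h, Walk.nil, by simp, by simp⟩
  | @cons a b c h p ih =>
    intro hw0
    by_cases ha : a ∈ S
    · exact ⟨a, ha, Walk.nil, by simp, by simp⟩
    · obtain ⟨w, hw, q, hsub, hint⟩ := ih hw0
      refine ⟨w, hw, Walk.cons h q, ?_, ?_⟩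
      · intro x hx
        rw [Walk.support_cons, List.mem_cons] at hx ⊢
        rcases hx with rfl | hx
        · exact Or.inl rfl
        · exact Or.inr (hsub x hx)
      · intro x hx hxw
        rw [Walk.support_cons, List.mem_cons] at hx
        rcases hx with rfl | hx
        · exact ha
        · exact hint x hx hxw

private lemma find_uncovered {G : SimpleGraph V} (S : Set V) (cov : Set (Sym2 V))
    (hcov : ∀ a b : V, s(a, b) ∈ cov → a ∈ S) :
    ∀ {x y : V} (p : G.Walk x y), x ∈ S →
      (∃ u v, G.Adj u v ∧ u ∈ S ∧ s(u, v) ∉ cov) ∨ y ∈ S := by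
  intro x y p
  induction p with
  | nil => exact fun h => Or.inr h
  | @cons a b c h p ih =>
    intro ha
    by_cases he : s(a, b) ∈ cov
    · exact ih (hcov b a (by rwa [Sym2.eq_swap]))
    · exact Or.inl ⟨a, b, h, ha, he⟩

/-- Invariant for a partial open ear decomposition. -/
structure EarInv (G : SimpleGraph V) {s t : V} (hst : G.Adj s t)
    (L : List ((a : V) × (b : V) × G.Walk a b)) : Prop where
  first : ∃ rest, L = ⟨s, t, Walk.cons hst Walk.nil⟩ :: rest
  paths : ∀ d ∈ L, d.2.2.IsPath
  ends_ne : ∀ d ∈ L, d.1 ≠ d.2.1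
  disj : L.Pairwise (fun d d' => ∀ e ∈ d.2.2.edges, e ∉ d'.2.2.edges)
  openears : ∀ n, ∀ hn : n < L.length, 0 < n →
      ((∀ x ∈ (L.get ⟨n, hn⟩).2.2.support, x ≠ (L.get ⟨n, hn⟩).1 → x ≠ (L.get ⟨n, hn⟩).2.1 →
          ∀ m, ∀ hm : m < L.length, m < n → x ∉ (L.get ⟨m, hm⟩).2.2.support) ∧
        (∃ m, ∃ hm : m < L.length, m < n ∧ (L.get ⟨n, hn⟩).1 ∈ (L.get ⟨m, hm⟩).2.2.support) ∧
        (∃ m, ∃ hm : m < L.length, m < n ∧ (L.get ⟨n, hn⟩).2.1 ∈ (L.get ⟨m, hm⟩).2.2.support))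

private lemma ear_append {G : SimpleGraph V} {s t : V} {hst : G.Adj s t}
    {L : List ((a : V) × (b : V) × G.Walk a b)} (hL : EarInv G hst L)
    (a b : V) (w : G.Walk a b) (hp : w.IsPath) (hne : a ≠ b)
    (ha : ∃ d ∈ L, a ∈ d.2.2.support) (hb : ∃ d ∈ L, b ∈ d.2.2.support)
    (hint : ∀ x ∈ w.support, x ≠ a → x ≠ b → ∀ d ∈ L, x ∉ d.2.2.support)
    (hnew : ∀ e ∈ w.edges, ∀ d ∈ L, e ∉ d.2.2.edges) :
    EarInv G hst (L ++ [⟨a, b, w⟩]) := by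
  have hlen : (L ++ [(⟨a, b, w⟩ : (a : V) × (b : V) × G.Walk a b)]).length = L.length + 1 := by
    simp
  have hgetL : ∀ (n : ℕ) (h : n < L.length),
      (L ++ [(⟨a, b, w⟩ : (a : V) × (b : V) × G.Walk a b)]).get ⟨n, by omega⟩ = L.get ⟨n, h⟩ :=
    fun n h => List.getElem_append_left h
  have hgetd : (L ++ [(⟨a, b, w⟩ : (a : V) × (b : V) × G.Walk a b)]).get ⟨L.length, by simp⟩ =
      ⟨a, b, w⟩ := by simp
  constructor
  · obtain ⟨rest, hrest⟩ := hL.first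
    exact ⟨rest ++ [⟨a, b, w⟩], by rw [hrest]; simp⟩
  · intro d hd
    rcases List.mem_append.mp hd with hd | hd
    · exact hL.paths d hd
    · simp only [List.mem_singleton] at hd; subst hd; exact hp
  · intro d hd
    rcases List.mem_append.mp hd with hd | hd
    · exact hL.ends_ne d hd
    · simp only [List.mem_singleton] at hd; subst hd; exact hne
  · rw [List.pairwise_append]
    refine ⟨hL.disj, List.pairwise_singleton _ _, ?_⟩
    intro d hd d' hd' e he
    simp only [List.mem_singleton] at hd'
    subst hd'
    exact fun he' => hnew e he' d hd he
  · intro n hn hn0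
    rw [hlen] at hn
    rcases Nat.lt_or_ge n L.length with h | h
    · -- old ear
      obtain ⟨h1, h2, h3⟩ := hL.openears n h hn0
      rw [hgetL n h]
      refine ⟨?_, ?_, ?_⟩
      · intro x hx hxa hxb m hm hmn
        have hm' : m < L.length := by omega
        rw [hgetL m hm']
        exact h1 x hx hxa hxb m hm' hmn
      · obtain ⟨m, hm, hmn, hmem⟩ := h2
        exact ⟨m, by omega, hmn, by rw [hgetL m hm]; exact hmem⟩
      · obtain ⟨m, hm, hmn, hmem⟩ := h3
        exact ⟨m, by omega, hmn, by rw [hgetL m hm]; exact hmem⟩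
    · -- the new ear
      have hn' : n = L.length := by omega
      subst hn'
      rw [hgetd]
      refine ⟨?_, ?_, ?_⟩
      · intro x hx hxa hxb m hm hmn
        have hm' : m < L.length := by omega
        rw [hgetL m hm']
        exact hint x hx hxa hxb _ (List.get_mem L ⟨m, hm'⟩)
      · obtain ⟨d, hd, hmem⟩ := ha
        obtain ⟨m, hm, rfl⟩ : ∃ m, ∃ hm : m < L.length, L.get ⟨m, hm⟩ = d := by
          obtain ⟨i, hi⟩ := List.mem_iff_get.mp hd
          exact ⟨i.1, i.2, hi⟩
        exact ⟨m, by omega, hm, by rw [hgetL m hm]; exact hmem⟩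
      · obtain ⟨d, hd, hmem⟩ := hb
        obtain ⟨m, hm, rfl⟩ : ∃ m, ∃ hm : m < L.length, L.get ⟨m, hm⟩ = d := by
          obtain ⟨i, hi⟩ := List.mem_iff_get.mp hd
          exact ⟨i.1, i.2, hi⟩
        exact ⟨m, by omega, hm, by rw [hgetL m hm]; exact hmem⟩

private lemma ear_step {G : SimpleGraph V}
    (hconn : G.Connected) (hbi : ∀ v : V, (G.induce ({v}ᶜ : Set V)).Connected)
    {s t : V} {hst : G.Adj s t}
    {L : List ((a : V) × (b : V) × G.Walk a b)} (hL : EarInv G hst L)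
    {e0 : Sym2 V} (he0 : e0 ∈ G.edgeSet) (hunc0 : ∀ d ∈ L, e0 ∉ d.2.2.edges) :
    ∃ d' : (a : V) × (b : V) × G.Walk a b, EarInv G hst (L ++ [d']) ∧
      ∃ e1 ∈ d'.2.2.edges, e1 ∈ G.edgeSet ∧ ∀ d ∈ L, e1 ∉ d.2.2.edges := by
  classical
  set S : Set V := {x | ∃ d ∈ L, x ∈ d.2.2.support} with hS
  set cov : Set (Sym2 V) := {e | ∃ d ∈ L, e ∈ d.2.2.edges} with hcov
  obtain ⟨rest, hrest⟩ := hL.first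
  have hfirstmem : (⟨s, t, Walk.cons hst Walk.nil⟩ : (a : V) × (b : V) × G.Walk a b) ∈ L := by
    rw [hrest]; exact List.mem_cons_self
  have hsS : s ∈ S := ⟨_, hfirstmem, Walk.start_mem_support _⟩
  have htS : t ∈ S := ⟨_, hfirstmem, Walk.end_mem_support _⟩
  have hcovS : ∀ a b : V, s(a, b) ∈ cov → a ∈ S := by
    rintro a b ⟨d, hd, he⟩
    exact ⟨d, hd, d.2.2.fst_mem_support_of_mem_edges he⟩
  -- find an uncovered edge with an endpoint in S
  obtain ⟨u, v, huv, hu, hunc⟩ :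
      ∃ u v, G.Adj u v ∧ u ∈ S ∧ s(u, v) ∉ cov := by
    induction e0 using Sym2.ind with
    | _ x y =>
      have hadj : G.Adj x y := he0
      obtain ⟨p⟩ := hconn.preconnected s x
      rcases find_uncovered S cov hcovS p hsS with h | hxS
      · exact h
      · exact ⟨x, y, hadj, hxS, fun ⟨d, hd, hc⟩ => hunc0 d hd hc⟩
  by_cases hvS : v ∈ S
  · -- single-edge ear
    refine ⟨⟨u, v, Walk.cons huv Walk.nil⟩, ?_, s(u, v), by simp, huv,
      fun d hd hc => hunc ⟨d, hd, hc⟩⟩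
    refine ear_append hL u v _ (by simp [huv.ne]) huv.ne hu hvS ?_ ?_
    · intro x hx hxu hxv
      simp only [Walk.support_cons, Walk.support_nil, List.mem_cons, List.mem_singleton] at hx
      rcases hx with rfl | rfl | h
      · exact absurd rfl hxu
      · exact absurd rfl hxv
      · exact absurd h (by simp)
    · intro e he d hd hc
      simp only [Walk.edges_cons, Walk.edges_nil, List.mem_singleton] at he
      subst he
      exact hunc ⟨d, hd, hc⟩
  · -- longer ear through new vertices
    have hvu : v ≠ u := huv.ne'
    obtain ⟨w0, hw0S, hw0u⟩ : ∃ w0, w0 ∈ S ∧ w0 ≠ u := by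
      by_cases hus : u = s
      · exact ⟨t, htS, by rw [hus]; exact hst.ne'⟩
      · exact ⟨s, hsS, fun h => hus h.symm⟩
    have hv' : v ∈ ({u}ᶜ : Set V) := hvu
    have hw0' : w0 ∈ ({u}ᶜ : Set V) := hw0u
    obtain ⟨p0⟩ := (hbi u).preconnected ⟨v, hv'⟩ ⟨w0, hw0'⟩
    let p1 : G.Walk v w0 := p0.map (Embedding.induce ({u}ᶜ : Set V)).toHom
    have hp1avoid : ∀ z ∈ p1.support, z ≠ u := by
      intro z hz
      rw [show p1.support = p0.support.map (Embedding.induce ({u}ᶜ : Set V)).toHom from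
        Walk.support_map _ _] at hz
      obtain ⟨⟨z', hz'⟩, _, rfl⟩ := List.mem_map.mp hz
      exact hz'
    obtain ⟨w, hwS, q, hqsub, hqint⟩ := walk_prefix_to_set S p1 hw0S
    have hqbsub : ∀ z ∈ q.bypass.support, z ∈ q.support := fun z hz => q.support_bypass_subset hz
    have hqbu : ∀ z ∈ q.bypass.support, z ≠ u := fun z hz => hp1avoid z (hqsub z (hqbsub z hz))
    have hwu : u ≠ w := fun h => hqbu w q.bypass.end_mem_support h.symm
    have hqbnew : ∀ z1 z2 : V, s(z1, z2) ∈ q.bypass.edges → s(z1, z2) ∉ cov := by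
      intro z1 z2 he hc
      have hne : z1 ≠ z2 := (q.bypass.edges_subset_edgeSet he).ne
      have hz1 : z1 ∈ q.support := hqbsub _ (q.bypass.fst_mem_support_of_mem_edges he)
      have hz2 : z2 ∈ q.support := hqbsub _ (q.bypass.snd_mem_support_of_mem_edges he)
      have hz1S : z1 ∈ S := hcovS z1 z2 hc
      have hz2S : z2 ∈ S := hcovS z2 z1 (by rwa [Sym2.eq_swap] at hc)
      by_cases hz1w : z1 = w
      · exact hqint z2 hz2 (fun h => hne (hz1w.trans h.symm)) hz2S
      · exact hqint z1 hz1 hz1w hz1S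
    refine ⟨⟨u, w, Walk.cons huv q.bypass⟩, ?_, s(u, v), by simp, huv,
      fun d hd hc => hunc ⟨d, hd, hc⟩⟩
    refine ear_append hL u w _ ?_ hwu hu hwS ?_ ?_
    · rw [Walk.cons_isPath_iff]
      exact ⟨q.bypass_isPath, fun hc => hqbu u hc rfl⟩
    · intro z hz hzu hzw d hd hzd
      simp only [Walk.support_cons, List.mem_cons] at hz
      rcases hz with rfl | hz
      · exact hzu rfl
      · exact hqint z (hqbsub z hz) hzw ⟨d, hd, hzd⟩
    · intro e he d hd hc
      simp only [Walk.edges_cons, List.mem_cons] at he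
      rcases he with rfl | he
      · exact hunc ⟨d, hd, hc⟩
      · revert he hc
        induction e using Sym2.ind with
        | _ z1 z2 => exact fun hc he => hqbnew z1 z2 he ⟨d, hd, hc⟩

private lemma ear_extend [Finite V] {G : SimpleGraph V}
    (hconn : G.Connected) (hbi : ∀ v : V, (G.induce ({v}ᶜ : Set V)).Connected)
    {s t : V} {hst : G.Adj s t} :
    ∀ (n : ℕ) (L : List ((a : V) × (b : V) × G.Walk a b)), EarInv G hst L →
      {e ∈ G.edgeSet | ∀ d ∈ L, e ∉ d.2.2.edges}.ncard ≤ n →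
      ∃ L', EarInv G hst L' ∧ ∀ e ∈ G.edgeSet, ∃ d ∈ L', e ∈ d.2.2.edges := by
  intro n
  induction n with
  | zero =>
    intro L hL hcard
    refine ⟨L, hL, ?_⟩
    intro e he
    by_contra hc
    push_neg at hc
    have hmem : e ∈ {e ∈ G.edgeSet | ∀ d ∈ L, e ∉ d.2.2.edges} := ⟨he, hc⟩
    have hpos : 0 < ({e ∈ G.edgeSet | ∀ d ∈ L, e ∉ d.2.2.edges}).ncard :=
      (Set.ncard_pos (Set.toFinite _)).mpr ⟨e, hmem⟩
    omega
  | succ n ih =>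
    intro L hL hcard
    by_cases hfull : ∀ e ∈ G.edgeSet, ∃ d ∈ L, e ∈ d.2.2.edges
    · exact ⟨L, hL, hfull⟩
    · push_neg at hfull
      obtain ⟨e0, he0, hunc0⟩ := hfull
      obtain ⟨d', hinv', e1, he1d, he1E, he1unc⟩ := ear_step hconn hbi hL he0 hunc0
      refine ih (L ++ [d']) hinv' ?_
      have hsub : {e ∈ G.edgeSet | ∀ d ∈ L ++ [d'], e ∉ d.2.2.edges} ⊂
          {e ∈ G.edgeSet | ∀ d ∈ L, e ∉ d.2.2.edges} := by
        constructor
        · rintro e ⟨he, hd⟩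
          exact ⟨he, fun d hdL => hd d (List.mem_append_left _ hdL)⟩
        · intro hss
          have h1 : e1 ∈ {e ∈ G.edgeSet | ∀ d ∈ L, e ∉ d.2.2.edges} := ⟨he1E, he1unc⟩
          have h2 := hss h1
          exact h2.2 d' (List.mem_append_right _ (List.mem_singleton_self _)) he1d
      have := Set.ncard_lt_ncard hsub (Set.toFinite _)
      omega

end EarDecompAux

open SimpleGraph

/-- Let `G` be a finite biconnected simple graph on at least 3 vertices and let `{s, t}`
be an edge of `G`.  Then `G` admits an open ear decomposition starting with the edge
`{s, t}`: simple paths `P 0, ..., P k` whose edge sets partition the edge set of `G`,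
where `P 0` is the single edge `{s, t}`, and for each `j ≥ 1` the internal vertices of
`P j` avoid all earlier ears, each endpoint of `P j` lies on some earlier ear, and the
two endpoints of `P j` are distinct. -/
theorem stmt_9 {V : Type*} [Fintype V] [DecidableEq V] (G : SimpleGraph V)
    (hconn : G.Connected)
    (hbi : ∀ v : V, (G.induce ({v}ᶜ : Set V)).Connected)
    (hcard : 3 ≤ Fintype.card V)
    (s t : V) (hst : G.Adj s t) :
    ∃ (k : ℕ) (A B : Fin (k + 1) → V) (P : ∀ i : Fin (k + 1), G.Walk (A i) (B i)),
      (∀ i, (P i).IsPath) ∧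
      (∀ e : Sym2 V, e ∈ G.edgeSet ↔ ∃ i, e ∈ (P i).edges) ∧
      (∀ i j : Fin (k + 1), ∀ e : Sym2 V, e ∈ (P i).edges → e ∈ (P j).edges → i = j) ∧
      A 0 = s ∧ B 0 = t ∧ (P 0).length = 1 ∧
      (∀ j : Fin (k + 1), 0 < j →
        (∀ x : V, x ∈ (P j).support → x ≠ A j → x ≠ B j →
          ∀ i : Fin (k + 1), i < j → x ∉ (P i).support) ∧
        (∃ i < j, A j ∈ (P i).support) ∧
        (∃ i < j, B j ∈ (P i).support)) ∧
      (∀ j, A j ≠ B j) := by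
    classical
  have hL0 : EarInv G hst [⟨s, t, Walk.cons hst Walk.nil⟩] := by
    constructor
    · exact ⟨[], rfl⟩
    · intro d hd
      simp only [List.mem_singleton] at hd
      subst hd
      simp [hst.ne]
    · intro d hd
      simp only [List.mem_singleton] at hd
      subst hd
      exact hst.ne
    · exact List.pairwise_singleton _ _
    · intro n hn hn0
      simp only [List.length_singleton] at hn
      omega
  obtain ⟨L, hL, hcover⟩ := ear_extend hconn hbi _ _ hL0 le_rfl
  obtain ⟨rest, hrest⟩ := hL.first
  subst hrest
  set L : List ((a : V) × (b : V) × G.Walk a b) :=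
    (⟨s, t, Walk.cons hst Walk.nil⟩ :: rest) with hLdef
  have hlen : L.length = rest.length + 1 := by simp [hLdef]
  refine ⟨rest.length,
    fun i => (L.get (Fin.cast hlen.symm i)).1,
    fun i => (L.get (Fin.cast hlen.symm i)).2.1,
    fun i => (L.get (Fin.cast hlen.symm i)).2.2, ?_, ?_, ?_, ?_, ?_, ?_, ?_, ?_⟩
  · exact fun i => hL.paths _ (List.get_mem _ _)
  · intro e
    constructor
    · intro he
      obtain ⟨d, hd, hed⟩ := hcover e he
      obtain ⟨i, hi⟩ := List.mem_iff_get.mp hd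
      refine ⟨Fin.cast hlen i, ?_⟩
      dsimp only
      have hcc : Fin.cast hlen.symm (Fin.cast hlen i) = i := rfl
      rw [hcc, hi]
      exact hed
    · rintro ⟨i, hi⟩
      exact Walk.edges_subset_edgeSet _ hi
  · intro i j e hei hej
    have hd := List.pairwise_iff_getElem.mp hL.disj
    rcases Nat.lt_trichotomy i.1 j.1 with h | h | h
    · exact absurd hej (hd i.1 j.1 (by omega) (by omega) h e hei)
    · exact Fin.ext h
    · exact absurd hei (hd j.1 i.1 (by omega) (by omega) h e hej)
  · have h0 : L.get (Fin.cast hlen.symm 0) = ⟨s, t, Walk.cons hst Walk.nil⟩ := by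
      simp [hLdef]
    dsimp only
    rw [h0]
  · have h0 : L.get (Fin.cast hlen.symm 0) = ⟨s, t, Walk.cons hst Walk.nil⟩ := by
      simp [hLdef]
    dsimp only
    rw [h0]
  · have h0 : L.get (Fin.cast hlen.symm 0) = ⟨s, t, Walk.cons hst Walk.nil⟩ := by
      simp [hLdef]
    dsimp only
    rw [h0]
    rfl
  · intro j hj
    have hj0 : 0 < j.1 := by simpa using hj
    obtain ⟨h1, h2, h3⟩ := hL.openears j.1 (by omega) hj0
    refine ⟨?_, ?_, ?_⟩
    · intro x hx hxa hxb i hij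
      exact h1 x hx hxa hxb i.1 (by omega) hij
    · obtain ⟨m, hm, hmn, hmem⟩ := h2
      exact ⟨⟨m, by omega⟩, hmn, hmem⟩
    · obtain ⟨m, hm, hmn, hmem⟩ := h3
      exact ⟨⟨m, by omega⟩, hmn, hmem⟩
  · exact fun j => hL.ends_ne _ (List.get_mem _ _)
end
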